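/- arXiv:1008.3364 — 4 statements merged into one kernel-verified Lean document; each statement's English description precedes it below -/
import Mathlib

section
/- Let n ≥ 1 and s_0, …, s_{n−1} ∈ ℂ, and let U^s_n be the n×n lower triangular Toeplitz matrix with (i,j) entry s_{i−j} for i ≥ j and 0 otherwise. There exists a function f in the Schur class 𝒮 whose Taylor coefficients at the origin satisfy f^{(j)}(0)/j! = s_j for j = 0, …, n−1 if and only if the matrix I_n − U^s_n (U^s_n)^* is positive semidefinite (equivalently, if and only if U^s_n is a contraction). -/
open Complex Filter Matrix Metric Set Asymptotics
open scoped ComplexConjugate ComplexOrder Topology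

noncomputable section

/-- The open unit disk in `ℂ`. -/
def unitDisk : Set ℂ := Metric.ball (0 : ℂ) 1

/-- The Schur class: functions analytic on the open unit disk, bounded by one in modulus there. -/
def SchurClass : Set (ℂ → ℂ) :=
  {f | DifferentiableOn ℂ f unitDisk ∧ ∀ z ∈ unitDisk, ‖f z‖ ≤ 1}

/-- Stolz angle at a boundary point `t0` with aperture `κ`. -/
def stolzAngle (t0 : ℂ) (κ : ℝ) : Set ℂ :=
  {z ∈ unitDisk | ‖z - t0‖ < κ * (1 - ‖z‖)}

/-- `g z → L` as `z → t0` nontangentially. -/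
def NTTendsto (g : ℂ → ℂ) (t0 L : ℂ) : Prop :=
  ∀ κ : ℝ, 1 < κ → Filter.Tendsto g (nhdsWithin t0 (stolzAngle t0 κ)) (nhds L)

/-- The boundary derivative `f_j(t0)` exists and equals `s`. -/
def HasBDeriv (f : ℂ → ℂ) (t0 : ℂ) (j : ℕ) (s : ℂ) : Prop :=
  NTTendsto (fun z => iteratedDeriv j f z / (Nat.factorial j : ℂ)) t0 s

/-- `f` is a solution of the boundary interpolation problem `BP_N` with data `t0`, `s`. -/
def SolvesBP (t0 : ℂ) (s : ℕ → ℂ) (N : ℕ) (f : ℂ → ℂ) : Prop :=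
  f ∈ SchurClass ∧ ∀ j ≤ N, HasBDeriv f t0 j (s j)

/-- `g = o(h)` as `z → t0` nontangentially. -/
def NTLittleO (g h : ℂ → ℂ) (t0 : ℂ) : Prop :=
  ∀ κ : ℝ, 1 < κ → g =o[nhdsWithin t0 (stolzAngle t0 κ)] h

/-- restrictions to the unit disk of the solutions of `BP_N` -/
def solSet (t0 : ℂ) (s : ℕ → ℂ) (N : ℕ) : Set (unitDisk → ℂ) :=
  {g | ∃ f, SolvesBP t0 s N f ∧ g = unitDisk.restrict f}

/-- The (1-indexed) `(j, l)` entry of the structured matrix `Ψ_n(t0)`. -/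
def PsiEntry (t0 : ℂ) (j l : ℕ) : ℂ :=
  if j ≤ l then (-1 : ℂ) ^ (l - 1) * ((l - 1).choose (j - 1) : ℂ) * t0 ^ (l + j - 1) else 0

/-- The (1-indexed) entry `p^s_{ij}` of the structured matrix `ℙ^s_n = H^s_n Ψ_n(t0) (U^s_n)^*`. -/
def pEntry (t0 : ℂ) (s : ℕ → ℂ) (i j : ℕ) : ℂ :=
  ∑ r ∈ Finset.Icc 1 j,
    (∑ l ∈ Finset.Icc 1 r, s (i + l - 1) * PsiEntry t0 l r) * conj (s (j - r))

/-- The structured matrix `ℙ^s_n = H^s_n Ψ_n(t0) (U^s_n)^*`. -/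
def Pmat (t0 : ℂ) (s : ℕ → ℂ) (n : ℕ) : Matrix (Fin n) (Fin n) ℂ :=
  Matrix.of fun i j => pEntry t0 s ((i : ℕ) + 1) ((j : ℕ) + 1)

/-- The augmented `n × (n+1)` matrix `[ℙ^s_n  B_n]`. -/
def PmatAug (t0 : ℂ) (s : ℕ → ℂ) (n : ℕ) : Matrix (Fin n) (Fin (n + 1)) ℂ :=
  Matrix.of fun i j => pEntry t0 s ((i : ℕ) + 1) ((j : ℕ) + 1)

/-- The lower triangular Toeplitz matrix `U^s_n`. -/
def Umat (s : ℕ → ℂ) (n : ℕ) : Matrix (Fin n) (Fin n) ℂ :=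
  Matrix.of fun i j => if (j : ℕ) ≤ (i : ℕ) then s ((i : ℕ) - (j : ℕ)) else 0

/-- `f` coincides on the unit disk with a finite Blaschke product of degree `d`. -/
def IsBlaschke (f : ℂ → ℂ) (d : ℕ) : Prop :=
  ∃ (c : ℂ) (a : Fin d → ℂ), ‖c‖ = 1 ∧ (∀ k, a k ∈ unitDisk) ∧
    ∀ z ∈ unitDisk, f z = c * ∏ k, (z - a k) / (1 - conj (a k) * z)

/-- Wirtinger derivative `∂/∂z`. -/
def wdz (u : ℂ → ℂ) : ℂ → ℂ :=
  fun z => (fderiv ℝ u z 1 - Complex.I * fderiv ℝ u z Complex.I) / 2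

/-- Wirtinger derivative `∂/∂z̄`. -/
def wdzbar (u : ℂ → ℂ) : ℂ → ℂ :=
  fun z => (fderiv ℝ u z 1 + Complex.I * fderiv ℝ u z Complex.I) / 2

/-- The kernel `(1 - |f(z)|²)/(1 - |z|²)`, regarded as a complex-valued function. -/
def spKernel (f : ℂ → ℂ) : ℂ → ℂ :=
  fun z => (((1 - ‖f z‖ ^ 2) / (1 - ‖z‖ ^ 2) : ℝ) : ℂ)

/-- `∂^{i+j}/∂z^i ∂z̄^j [(1 - |f(z)|²)/(1 - |z|²)]`. -/
def spDeriv (f : ℂ → ℂ) (i j : ℕ) : ℂ → ℂ := wdz^[i] (wdzbar^[j] (spKernel f))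

/-- The Schwarz–Pick matrix `P^f_n(z)`. -/
def SchwarzPick (f : ℂ → ℂ) (n : ℕ) (z : ℂ) : Matrix (Fin n) (Fin n) ℂ :=
  Matrix.of fun i j =>
    (1 / ((Nat.factorial (i : ℕ) : ℂ) * (Nat.factorial (j : ℕ) : ℂ))) * spDeriv f i j z

/-- The class `𝒮^{(n)}(t0)` of Schur functions satisfying a higher order
Carathéodory–Julia condition at `t0`. -/
def SchurN (n : ℕ) (t0 : ℂ) : Set (ℂ → ℂ) :=
  {f | f ∈ SchurClass ∧
    Filter.liminf (fun z => ((spDeriv f (n - 1) (n - 1) z).re : EReal))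
      (nhdsWithin t0 unitDisk) < ⊤}

/-- The Jordan-type matrix `T` with diagonal `t0` and subdiagonal `1`. -/
def Tmat (t0 : ℂ) (n : ℕ) : Matrix (Fin n) (Fin n) ℂ :=
  Matrix.of fun i j =>
    if (i : ℕ) = (j : ℕ) then t0 else if (i : ℕ) = (j : ℕ) + 1 then 1 else 0

/-- The column `E = (1,0,…,0)ᵀ`. -/
def Evec (n : ℕ) : Matrix (Fin n) (Fin 1) ℂ :=
  Matrix.of fun i _ => if (i : ℕ) = 0 then 1 else 0

/-- The column `M = (s_0,…,s_{n−1})ᵀ`. -/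
def Mvec (s : ℕ → ℂ) (n : ℕ) : Matrix (Fin n) (Fin 1) ℂ :=
  Matrix.of fun i _ => s (i : ℕ)

/-- The matrix `P̃ = ℙ^s_n + M M^*`. -/
def Ptilde (t0 : ℂ) (s : ℕ → ℂ) (n : ℕ) : Matrix (Fin n) (Fin n) ℂ :=
  Pmat t0 s n + Mvec s n * (Mvec s n)ᴴ

/-- The resolvent-type matrix `(P̃ − z ℙ^s_n T^*)⁻¹`. -/
def resolv (t0 : ℂ) (s : ℕ → ℂ) (n : ℕ) (z : ℂ) : Matrix (Fin n) (Fin n) ℂ :=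
  (Ptilde t0 s n - z • (Pmat t0 s n * (Tmat t0 n)ᴴ))⁻¹

/-- `α = sqrt(1 − M^* P̃⁻¹ M)`. -/
def alphaC (t0 : ℂ) (s : ℕ → ℂ) (n : ℕ) : ℂ :=
  (Real.sqrt (1 - (((Mvec s n)ᴴ * (Ptilde t0 s n)⁻¹ * Mvec s n) 0 0).re) : ℝ)

/-- `β = sqrt(1 − E^* P̃⁻¹ E)`. -/
def betaC (t0 : ℂ) (s : ℕ → ℂ) (n : ℕ) : ℂ :=
  (Real.sqrt (1 - (((Evec n)ᴴ * (Ptilde t0 s n)⁻¹ * Evec n) 0 0).re) : ℝ)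

/-- The rational function `a`. -/
def afun (t0 : ℂ) (s : ℕ → ℂ) (n : ℕ) (z : ℂ) : ℂ :=
  ((Evec n)ᴴ * resolv t0 s n z * Mvec s n) 0 0

/-- The rational function `b`. -/
def bfun (t0 : ℂ) (s : ℕ → ℂ) (n : ℕ) (z : ℂ) : ℂ :=
  betaC t0 s n * (1 - z * ((Evec n)ᴴ * resolv t0 s n z * (Tmat t0 n)⁻¹ * Evec n) 0 0)

/-- The rational function `c`. -/
def cfun (t0 : ℂ) (s : ℕ → ℂ) (n : ℕ) (z : ℂ) : ℂ :=
  alphaC t0 s n * (1 - z * ((Mvec s n)ᴴ * (Tmat t0 n)ᴴ * resolv t0 s n z * Mvec s n) 0 0)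

/-- The rational function `d`. -/
def dfun (t0 : ℂ) (s : ℕ → ℂ) (n : ℕ) (z : ℂ) : ℂ :=
  z * alphaC t0 s n * betaC t0 s n *
    ((Mvec s n)ᴴ * (Pmat t0 s n)⁻¹ * Ptilde t0 s n * resolv t0 s n z * (Tmat t0 n)⁻¹ *
      Evec n) 0 0

/-- Taylor coefficient of `g` at `t0`: `g_j(t0) = g^{(j)}(t0)/j!`. -/
def tcoef (g : ℂ → ℂ) (t0 : ℂ) (j : ℕ) : ℂ :=
  iteratedDeriv j g t0 / (Nat.factorial j : ℂ)


namespace SchurAux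
open Finset Metric Nat

/-! ### Power series coefficient infrastructure -/

def cseq (a b : ℕ → ℂ) (m : ℕ) : ℂ := ∑ k ∈ Finset.range (m+1), a k * b (m - k)

def wseq (g : ℂ → ℂ) (k : ℕ) : ℂ := if k = 0 then 0 else tcoef g 0 (k-1)

lemma hasSum_tcoef {f : ℂ → ℂ} {R : ℝ} (hf : DifferentiableOn ℂ f (ball 0 R)) {z : ℂ}
    (hz : z ∈ ball 0 R) : HasSum (fun n => tcoef f 0 n * z ^ n) (f z) := by
  have H := Complex.hasSum_taylorSeries_on_ball hf hz
  have e : (fun n => tcoef f 0 n * z ^ n)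
      = fun (n : ℕ) => (n ! : ℂ)⁻¹ • (z - 0) ^ n • iteratedDeriv n f 0 := by
    funext n
    simp only [tcoef, smul_eq_mul, div_eq_mul_inv, sub_zero]
    ring
  rw [e]; exact H

lemma summable_norm_of_hasSum {a : ℕ → ℂ} {R : ℝ} {f : ℂ → ℂ}
    (h : ∀ z ∈ ball (0:ℂ) R, HasSum (fun n => a n * z ^ n) (f z)) {z : ℂ}
    (hz : z ∈ ball (0:ℂ) R) : Summable fun n => ‖a n * z ^ n‖ := by
  have hz' : ‖z‖ < R := by simpa [mem_ball, dist_eq_norm] using hz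
  obtain ⟨ρ, hρ1, hρ2⟩ : ∃ ρ, ‖z‖ < ρ ∧ ρ < R := ⟨(‖z‖ + R) / 2, by linarith, by linarith⟩
  have hρ0 : 0 < ρ := lt_of_le_of_lt (norm_nonneg z) hρ1
  have hmem : (ρ : ℂ) ∈ ball (0:ℂ) R := by
    simp only [mem_ball, dist_eq_norm, sub_zero, Complex.norm_real, Real.norm_eq_abs]
    rwa [_root_.abs_of_pos hρ0]
  have hsum := (h _ hmem).summable
  have htend : Tendsto (fun n => ‖a n * (ρ:ℂ) ^ n‖) atTop (nhds 0) := by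
    simpa using hsum.tendsto_atTop_zero.norm
  obtain ⟨C, hC⟩ := htend.bddAbove_range
  have hC' : ∀ n, ‖a n‖ * ρ ^ n ≤ C := by
    intro n
    have := hC ⟨n, rfl⟩
    simpa [norm_mul, norm_pow, Complex.norm_real, Real.norm_eq_abs, _root_.abs_of_pos hρ0]
      using this
  have hq0 : 0 ≤ ‖z‖ / ρ := div_nonneg (norm_nonneg z) hρ0.le
  have hq1 : ‖z‖ / ρ < 1 := (div_lt_one hρ0).2 hρ1
  have hgeom : Summable (fun n => C * (‖z‖ / ρ) ^ n) :=
    (summable_geometric_of_lt_one hq0 hq1).mul_left C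
  refine Summable.of_nonneg_of_le (fun n => norm_nonneg _) (fun n => ?_) hgeom
  have e : ‖a n * z ^ n‖ = (‖a n‖ * ρ ^ n) * (‖z‖ / ρ) ^ n := by
    rw [norm_mul, norm_pow, div_pow]
    field_simp
  rw [e]
  exact mul_le_mul_of_nonneg_right (hC' n) (pow_nonneg hq0 n)

lemma hasFPS {a : ℕ → ℂ} {R : ℝ} (hR : 0 < R) {f : ℂ → ℂ}
    (h : ∀ z ∈ ball (0:ℂ) R, HasSum (fun n => a n * z ^ n) (f z)) :
    HasFPowerSeriesOnBall f (FormalMultilinearSeries.ofScalars ℂ a) 0 (ENNReal.ofReal R) := by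
  constructor
  · refine ENNReal.le_of_forall_nnreal_lt fun r hr => ?_
    have hrR : (r : ℝ) < R := by
      exact_mod_cast (ENNReal.lt_ofReal_iff_toReal_lt (by simp)).mp hr
    have hmem : ((r : ℝ) : ℂ) ∈ ball (0:ℂ) R := by
      simp only [mem_ball, dist_eq_norm, sub_zero, Complex.norm_real, Real.norm_eq_abs]
      rwa [_root_.abs_of_nonneg r.coe_nonneg]
    have hsum := (h _ hmem).summable
    have htend : Tendsto (fun n => ‖a n * ((r:ℝ):ℂ) ^ n‖) atTop (nhds 0) := by
      simpa using hsum.tendsto_atTop_zero.norm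
    obtain ⟨C, hC⟩ := htend.bddAbove_range
    refine FormalMultilinearSeries.le_radius_of_bound _ C fun n => ?_
    rw [FormalMultilinearSeries.ofScalars_norm]
    have := hC ⟨n, rfl⟩
    simpa [norm_mul, norm_pow, Complex.norm_real, Real.norm_eq_abs,
      _root_.abs_of_nonneg r.coe_nonneg] using this
  · simpa using hR
  · intro y hy
    rw [Metric.emetric_ball] at hy
    have := h y hy
    simpa [FormalMultilinearSeries.coeff, FormalMultilinearSeries.ofScalars,
      smul_eq_mul, mul_comm] using this

lemma coeff_ext {a b : ℕ → ℂ} {R : ℝ} (hR : 0 < R) {f : ℂ → ℂ}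
    (ha : ∀ z ∈ ball (0:ℂ) R, HasSum (fun n => a n * z ^ n) (f z))
    (hb : ∀ z ∈ ball (0:ℂ) R, HasSum (fun n => b n * z ^ n) (f z)) : a = b := by
  have h1 := (hasFPS hR ha).hasFPowerSeriesAt
  have h2 := (hasFPS hR hb).hasFPowerSeriesAt
  have := h1.eq_formalMultilinearSeries h2
  exact (FormalMultilinearSeries.ofScalars_series_eq_iff ℂ a b).mp this

lemma hasSum_wseq {g : ℂ → ℂ} {R : ℝ} (hg : DifferentiableOn ℂ g (ball 0 R)) {z : ℂ}
    (hz : z ∈ ball (0:ℂ) R) : HasSum (fun n => wseq g n * z ^ n) (z * g z) := by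
  have h := (hasSum_tcoef hg hz).mul_left z
  have h' : HasSum (fun n => wseq g (n+1) * z ^ (n+1)) (z * g z) := by
    have e : (fun n => wseq g (n+1) * z ^ (n+1)) = fun n => z * (tcoef g 0 n * z ^ n) := by
      funext n; simp only [wseq, Nat.add_sub_cancel, if_neg (Nat.succ_ne_zero n)]
      ring
    rw [e]; exact h
  have h2 := (hasSum_nat_add_iff (f := fun n => wseq g n * z ^ n) 1).mp h'
  have h0 : ∑ i ∈ Finset.range 1, wseq g i * z ^ i = 0 := by
    simp [wseq]
  rw [h0, add_zero] at h2
  exact h2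

lemma hasSum_cauchy {a b : ℕ → ℂ} {R : ℝ} {F G : ℂ → ℂ}
    (ha : ∀ z ∈ ball (0:ℂ) R, HasSum (fun n => a n * z ^ n) (F z))
    (hb : ∀ z ∈ ball (0:ℂ) R, HasSum (fun n => b n * z ^ n) (G z))
    {z : ℂ} (hz : z ∈ ball (0:ℂ) R) :
    HasSum (fun n => cseq a b n * z ^ n) (F z * G z) := by
  have hna := summable_norm_of_hasSum ha hz
  have hnb := summable_norm_of_hasSum hb hz
  have hsum : Summable fun n => ∑ k ∈ Finset.range (n+1), (a k * z ^ k) * (b (n-k) * z ^ (n-k)) :=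
    (summable_norm_sum_mul_range_of_summable_norm hna hnb).of_norm
  have htsum := tsum_mul_tsum_eq_tsum_sum_range_of_summable_norm hna hnb
  rw [(ha z hz).tsum_eq, (hb z hz).tsum_eq] at htsum
  have he : (fun n => cseq a b n * z ^ n)
      = fun n => ∑ k ∈ Finset.range (n+1), (a k * z ^ k) * (b (n-k) * z ^ (n-k)) := by
    funext n
    rw [cseq, Finset.sum_mul]
    refine Finset.sum_congr rfl fun k hk => ?_
    have hkn : k ≤ n := Nat.lt_succ_iff.mp (Finset.mem_range.mp hk)
    have hzz : z ^ k * z ^ (n-k) = z ^ n := by rw [← pow_add, Nat.add_sub_cancel' hkn]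
    conv_rhs => rw [mul_mul_mul_comm]
    rw [hzz]
  rw [he, htsum]
  exact hsum.hasSum

lemma hasSum_delta (c : ℂ) (z : ℂ) :
    HasSum (fun n => (if n = 0 then c else 0) * z ^ n) c := by
  have e : (fun n => (if n = 0 then c else 0) * z ^ n) = fun n => if n = 0 then c else 0 := by
    funext n; by_cases h : n = 0 <;> simp [h]
  rw [e]
  exact hasSum_ite_eq 0 c

lemma cseq_delta_expand (t w : ℕ → ℂ) (c : ℂ) (i : ℕ) :
    cseq t (fun k => (if k = 0 then 1 else 0) + c * w k) i
      = t i + c * ∑ k ∈ Finset.range (i+1), t k * w (i - k) := by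
  rw [cseq]
  have e1 : ∀ k ∈ Finset.range (i+1),
      t k * ((if i - k = 0 then (1:ℂ) else 0) + c * w (i - k))
      = (if k = i then t i else 0) + c * (t k * w (i - k)) := by
    intro k hk
    have hkn : k ≤ i := Nat.lt_succ_iff.mp (Finset.mem_range.mp hk)
    by_cases h : k = i
    · subst h
      rw [Nat.sub_self, if_pos rfl, if_pos rfl]
      ring
    · have : i - k ≠ 0 := Nat.sub_ne_zero_of_lt (lt_of_le_of_ne hkn h)
      rw [if_neg this, if_neg h]; ring
  rw [Finset.sum_congr rfl e1, Finset.sum_add_distrib, Finset.sum_ite_eq'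
    (Finset.range (i+1)) i (fun _ => t i), if_pos (Finset.self_mem_range_succ i),
    ← Finset.mul_sum]

lemma coeffRel {R : ℝ} (hR : 0 < R) {f g : ℂ → ℂ}
    (hf : DifferentiableOn ℂ f (ball 0 R)) (hg : DifferentiableOn ℂ g (ball 0 R))
    (c d : ℂ) (hid : ∀ z ∈ ball (0:ℂ) R, f z * (1 + c * (z * g z)) = d + z * g z) :
    ∀ i, cseq (tcoef f 0) (fun k => (if k = 0 then 1 else 0) + c * wseq g k) i
        = (if i = 0 then d else 0) + wseq g i := by
  have hft : ∀ z ∈ ball (0:ℂ) R, HasSum (fun n => tcoef f 0 n * z ^ n) (f z) :=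
    fun z hz => hasSum_tcoef hf hz
  have hwt : ∀ z ∈ ball (0:ℂ) R, HasSum (fun n => wseq g n * z ^ n) (z * g z) :=
    fun z hz => hasSum_wseq hg hz
  have het : ∀ z ∈ ball (0:ℂ) R,
      HasSum (fun n => ((if n = 0 then 1 else 0) + c * wseq g n) * z ^ n) (1 + c * (z * g z)) := by
    intro z hz
    have h1 := hasSum_delta 1 z
    have h2 := (hwt z hz).mul_left c
    have e : (fun n => ((if n = 0 then (1:ℂ) else 0) + c * wseq g n) * z ^ n)
        = fun n => (if n = 0 then (1:ℂ) else 0) * z ^ n + c * (wseq g n * z ^ n) := by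
      funext n; ring
    rw [e]; exact h1.add h2
  have hrt : ∀ z ∈ ball (0:ℂ) R,
      HasSum (fun n => ((if n = 0 then d else 0) + wseq g n) * z ^ n) (d + z * g z) := by
    intro z hz
    have h1 := hasSum_delta d z
    have h2 := hwt z hz
    have e : (fun n => ((if n = 0 then d else 0) + wseq g n) * z ^ n)
        = fun n => (if n = 0 then d else 0) * z ^ n + wseq g n * z ^ n := by
      funext n; ring
    rw [e]; exact h1.add h2
  have hL : ∀ z ∈ ball (0:ℂ) R,
      HasSum (fun n =>
        cseq (tcoef f 0) (fun k => (if k = 0 then 1 else 0) + c * wseq g k) n * z ^ n)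
        (d + z * g z) := by
    intro z hz
    rw [← hid z hz]
    exact hasSum_cauchy hft het hz
  have key := coeff_ext hR hL hrt
  exact fun i => congrFun key i

lemma tcoef_of_eqOn_const {R : ℝ} (hR : 0 < R) {F : ℂ → ℂ} {c : ℂ}
    (hf : DifferentiableOn ℂ F (ball 0 R))
    (hc : ∀ z ∈ ball (0:ℂ) R, F z = c) : tcoef F 0 = fun k => if k = 0 then c else 0 := by
  refine coeff_ext hR (fun z hz => hasSum_tcoef hf hz) (fun z hz => ?_)
  rw [hc z hz]
  exact hasSum_delta c z

lemma tcoef_poly {n : ℕ} (s : ℕ → ℂ) :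
    tcoef (fun z => ∑ j ∈ Finset.range (n+1), s j * z ^ j) 0
      = fun k => if k ≤ n then s k else 0 := by
  refine coeff_ext one_pos (fun z hz => hasSum_tcoef ?_ hz) (fun z hz => ?_)
  · exact (Differentiable.fun_sum fun j _ =>
      (differentiable_const _).mul (differentiable_pow j)).differentiableOn
  · have h0 : ∀ k ∉ Finset.range (n+1), (if k ≤ n then s k else 0) * z ^ k = 0 := by
      intro k hk
      rw [Finset.mem_range, Nat.lt_succ_iff] at hk
      simp [hk]
    have h : HasSum (fun k => (if k ≤ n then s k else 0) * z ^ k) _ := hasSum_sum_of_ne_finset_zero h0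
    have e : ∑ k ∈ Finset.range (n+1), (if k ≤ n then s k else 0) * z ^ k
        = ∑ j ∈ Finset.range (n+1), s j * z ^ j := by
      refine Finset.sum_congr rfl fun k hk => ?_
      rw [if_pos (Nat.lt_succ_iff.mp (Finset.mem_range.mp hk))]
    rw [e] at h
    exact h

/-! ### Toeplitz matrix infrastructure -/

lemma Umat_apply (s : ℕ → ℂ) (n : ℕ) (i j : Fin n) :
    Umat s n i j = if (j:ℕ) ≤ (i:ℕ) then s ((i:ℕ) - (j:ℕ)) else 0 := rfl

lemma Umat_congr {n : ℕ} {s t : ℕ → ℂ} (h : ∀ k < n, s k = t k) : Umat s n = Umat t n := by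
  ext i j
  simp only [Umat_apply]
  split
  · exact h _ (lt_of_le_of_lt (Nat.sub_le _ _) i.2)
  · rfl

lemma cseq_rev (a b : ℕ → ℂ) (m : ℕ) :
    ∑ k ∈ Finset.range (m+1), a (m - k) * b k = cseq a b m := by
  rw [cseq]
  have := Finset.sum_range_reflect (fun k => a k * b (m - k)) (m+1)
  rw [← this]
  refine Finset.sum_congr rfl fun k hk => ?_
  have hk' : k ≤ m := Nat.lt_succ_iff.mp (Finset.mem_range.mp hk)
  have h1 : m + 1 - 1 - k = m - k := by omega
  have h2 : m - (m - k) = k := by omega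
  rw [h1, h2]

lemma Umat_mul {n : ℕ} (a b : ℕ → ℂ) : Umat a n * Umat b n = Umat (cseq a b) n := by
  ext i j
  rw [Matrix.mul_apply]
  simp only [Umat_apply]
  by_cases hij : (j:ℕ) ≤ (i:ℕ)
  · rw [if_pos hij]
    have h1 : ∑ k : Fin n,
        (if (k:ℕ) ≤ (i:ℕ) then a ((i:ℕ) - k) else 0) *
          (if (j:ℕ) ≤ (k:ℕ) then b ((k:ℕ) - j) else 0)
        = ∑ k ∈ Finset.range n,
          (if k ≤ (i:ℕ) then a ((i:ℕ) - k) else 0) *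
            (if (j:ℕ) ≤ k then b (k - (j:ℕ)) else 0) :=
      Fin.sum_univ_eq_sum_range
        (fun k => (if k ≤ (i:ℕ) then a ((i:ℕ) - k) else 0) *
          (if (j:ℕ) ≤ k then b (k - (j:ℕ)) else 0)) n
    rw [h1]
    have hsub : Finset.Icc (j:ℕ) (i:ℕ) ⊆ Finset.range n := by
      intro k hk
      rw [Finset.mem_Icc] at hk
      exact Finset.mem_range.mpr (lt_of_le_of_lt hk.2 i.2)
    rw [← Finset.sum_subset hsub]
    · have h2 : ∑ k ∈ Finset.Icc (j:ℕ) (i:ℕ),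
          (if k ≤ (i:ℕ) then a ((i:ℕ) - k) else 0) *
            (if (j:ℕ) ≤ k then b (k - (j:ℕ)) else 0)
          = ∑ k ∈ Finset.Icc (j:ℕ) (i:ℕ), a ((i:ℕ) - k) * b (k - (j:ℕ)) := by
        refine Finset.sum_congr rfl fun k hk => ?_
        rw [Finset.mem_Icc] at hk
        rw [if_pos hk.2, if_pos hk.1]
      rw [h2]
      rw [← cseq_rev a b ((i:ℕ) - (j:ℕ))]
      refine Finset.sum_bij' (fun k _ => k - (j:ℕ)) (fun m _ => (j:ℕ) + m) ?_ ?_ ?_ ?_ ?_ <;>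
        intro k hk <;> simp only [Finset.mem_Icc, Finset.mem_range] at hk ⊢
      · omega
      · omega
      · omega
      · omega
      · congr 2 <;> omega
    · intro k hk hk2
      by_cases h3 : k ≤ (i:ℕ)
      · have : ¬ (j:ℕ) ≤ k := by
          rw [Finset.mem_Icc] at hk2; omega
        rw [if_neg this, mul_zero]
      · rw [if_neg h3, zero_mul]
  · rw [if_neg hij]
    refine Finset.sum_eq_zero fun k _ => ?_
    by_cases h3 : (k:ℕ) ≤ (i:ℕ)
    · have : ¬ (j:ℕ) ≤ (k:ℕ) := by omega
      rw [if_neg this, mul_zero]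
    · rw [if_neg h3, zero_mul]

lemma Umat_comm {n : ℕ} (a b : ℕ → ℂ) : Umat a n * Umat b n = Umat b n * Umat a n := by
  rw [Umat_mul, Umat_mul]
  refine Umat_congr fun m _ => ?_
  rw [← cseq_rev b a m, cseq]
  exact Finset.sum_congr rfl fun k hk => by ring

lemma Umat_delta {n : ℕ} (c : ℂ) : Umat (fun k => if k = 0 then c else 0) n = c • 1 := by
  ext i j
  simp only [Umat_apply, Matrix.smul_apply, Matrix.one_apply, smul_eq_mul]
  by_cases h : (j:ℕ) ≤ (i:ℕ)
  · rw [if_pos h]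
    by_cases h2 : i = j
    · subst h2
      simp
    · have hne : (i:ℕ) ≠ (j:ℕ) := fun hc => h2 (Fin.ext hc)
      have : (i:ℕ) - (j:ℕ) ≠ 0 := by omega
      rw [if_neg this, if_neg h2, mul_zero]
  · have h2 : i ≠ j := fun hc => h (le_of_eq (congrArg Fin.val hc.symm))
    rw [if_neg h, if_neg h2, mul_zero]

lemma Umat_add {n : ℕ} (a b : ℕ → ℂ) :
    Umat (fun k => a k + b k) n = Umat a n + Umat b n := by
  ext i j
  simp only [Umat_apply, Matrix.add_apply]
  split <;> simp

lemma Umat_smul {n : ℕ} (c : ℂ) (a : ℕ → ℂ) :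
    Umat (fun k => c * a k) n = c • Umat a n := by
  ext i j
  simp only [Umat_apply, Matrix.smul_apply, smul_eq_mul]
  split <;> simp

lemma Umat_det {n : ℕ} (a : ℕ → ℂ) : (Umat a n).det = a 0 ^ n := by
  have h : (Umat a n).BlockTriangular OrderDual.toDual := by
    intro i j hij
    have : (i:ℕ) < (j:ℕ) := hij
    exact if_neg (by omega)
  rw [Matrix.det_of_lowerTriangular _ h]
  have he : ∀ i : Fin n, Umat a n i i = a 0 := by
    intro i
    simp [Umat_apply]
  rw [Finset.prod_congr rfl fun i _ => he i, Finset.prod_const, Finset.card_univ,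
    Fintype.card_fin]

/-! ### Positive semidefiniteness lemmas -/

lemma psd_one_sub_iff {m : ℕ} (A : Matrix (Fin m) (Fin m) ℂ) :
    (1 - A * Aᴴ).PosSemidef ↔
      ∀ x : Fin m → ℂ, star (Aᴴ *ᵥ x) ⬝ᵥ (Aᴴ *ᵥ x) ≤ star x ⬝ᵥ x := by
  have hq : ∀ x : Fin m → ℂ, star x ⬝ᵥ ((1 - A * Aᴴ) *ᵥ x)
      = star x ⬝ᵥ x - star (Aᴴ *ᵥ x) ⬝ᵥ (Aᴴ *ᵥ x) := by
    intro x
    rw [Matrix.sub_mulVec, Matrix.one_mulVec, dotProduct_sub]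
    congr 1
    rw [← Matrix.mulVec_mulVec, Matrix.star_mulVec, Matrix.conjTranspose_conjTranspose,
      Matrix.dotProduct_mulVec]
  constructor
  · intro h x
    have h2 := h.dotProduct_mulVec_nonneg x
    rw [hq] at h2
    exact sub_nonneg.mp h2
  · intro h
    refine .of_dotProduct_mulVec_nonneg (Matrix.isHermitian_one.sub (Matrix.isHermitian_mul_conjTranspose_self A))
      (fun x => ?_)
    rw [hq]
    exact sub_nonneg.mpr (h x)

lemma psd_smul {m : ℕ} {M : Matrix (Fin m) (Fin m) ℂ} (hM : M.PosSemidef) {r : ℝ} (hr : 0 ≤ r) :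
    ((r:ℂ) • M).PosSemidef := by
  refine .of_dotProduct_mulVec_nonneg ?_ ?_
  · show ((r:ℂ) • M)ᴴ = (r:ℂ) • M
    rw [Matrix.conjTranspose_smul, hM.1]
    congr 1
    exact Complex.conj_ofReal r
  · intro x
    rw [Matrix.smul_mulVec, dotProduct_smul, smul_eq_mul]
    exact mul_nonneg (Complex.zero_le_real.mpr hr) (hM.dotProduct_mulVec_nonneg x)

lemma psd_smul_iff {m : ℕ} {M : Matrix (Fin m) (Fin m) ℂ} {r : ℝ} (hr : 0 < r) :
    ((r:ℂ) • M).PosSemidef ↔ M.PosSemidef := by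
  constructor
  · intro h
    have h2 := psd_smul h (r := r⁻¹) (inv_nonneg.mpr hr.le)
    rw [smul_smul, ← Complex.ofReal_mul, inv_mul_cancel₀ hr.ne', Complex.ofReal_one,
      one_smul] at h2
    exact h2
  · exact fun h => psd_smul h hr.le

lemma psd_conj_iff {m : ℕ} {M : Matrix (Fin m) (Fin m) ℂ} (E : Matrix (Fin m) (Fin m) ℂ)
    (hE : IsUnit E.det) : (E * M * Eᴴ).PosSemidef ↔ M.PosSemidef := by
  constructor
  · intro h
    have h2 := h.mul_mul_conjTranspose_same E⁻¹
    have hEH : IsUnit (Eᴴ).det := by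
      rw [Matrix.det_conjTranspose]; exact hE.star
    have e : E⁻¹ * (E * M * Eᴴ) * (E⁻¹)ᴴ = M := by
      rw [Matrix.conjTranspose_nonsing_inv]
      calc E⁻¹ * (E * M * Eᴴ) * (Eᴴ)⁻¹
          = (E⁻¹ * E) * M * (Eᴴ * (Eᴴ)⁻¹) := by simp only [Matrix.mul_assoc]
        _ = M := by
            rw [Matrix.nonsing_inv_mul _ hE, Matrix.mul_nonsing_inv _ hEH, one_mul, mul_one]
    rwa [e] at h2
  · exact fun h => h.mul_mul_conjTranspose_same E

lemma key_identity {m : ℕ} (U E W : Matrix (Fin m) (Fin m) ℂ) (c : ℂ)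
    (hE : E = 1 + c • W) (hEU : E * U = (starRingEnd ℂ c) • 1 + W) :
    E * (1 - U * Uᴴ) * Eᴴ = (1 - c * starRingEnd ℂ c) • (1 - W * Wᴴ) := by
  have step1 : E * (1 - U * Uᴴ) * Eᴴ = E * Eᴴ - (E * U) * (E * U)ᴴ := by
    rw [Matrix.mul_sub, Matrix.mul_one, Matrix.sub_mul, Matrix.conjTranspose_mul]
    simp only [Matrix.mul_assoc]
  rw [step1, hEU, hE]
  simp only [Matrix.conjTranspose_add, Matrix.conjTranspose_smul, Matrix.conjTranspose_one,
    Matrix.add_mul, Matrix.mul_add, Matrix.smul_mul, Matrix.mul_smul, Matrix.one_mul,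
    Matrix.mul_one, smul_smul, Complex.conj_conj, smul_sub, sub_smul, one_smul,
    Complex.star_def]
  module

lemma quad_single {m : ℕ} (M : Matrix (Fin m) (Fin m) ℂ) (j : Fin m) :
    star ((Pi.single j (1:ℂ)) : Fin m → ℂ) ⬝ᵥ M *ᵥ (Pi.single j (1:ℂ)) = M j j := by
  have hs : star ((Pi.single j (1:ℂ)) : Fin m → ℂ) = Pi.single j (1:ℂ) := by
    rw [← Pi.single_star (f := fun _ : Fin m => ℂ) j (1:ℂ), star_one]
  rw [hs, Matrix.mulVec_single, single_dotProduct]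
  simp

lemma psd_row_zero {m : ℕ} {M : Matrix (Fin m) (Fin m) ℂ} (hM : M.PosSemidef) (i j : Fin m)
    (hjj : M j j = 0) : M i j = 0 := by
  by_cases hij : i = j
  · subst hij; exact hjj
  by_contra ha
  have hsq : 0 < Complex.normSq (M i j) := by
    rw [Complex.normSq_pos]; exact ha
  set t : ℝ := ((M i i).re + 1) / (2 * Complex.normSq (M i j)) with hT
  set cc : ℂ := -(t:ℂ) * starRingEnd ℂ (M i j) with hcc
  set x : Fin m → ℂ := Pi.single j cc + Pi.single i 1 with hx
  have hMji : M j i = starRingEnd ℂ (M i j) := by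
    have := congrFun (congrFun hM.1 j) i
    simpa [Matrix.conjTranspose_apply] using this.symm
  have hq : star x ⬝ᵥ M *ᵥ x
      = starRingEnd ℂ cc * M j i + cc * M i j + M i i := by
    rw [hx]
    rw [star_add]
    have h1 : star ((Pi.single j cc) : Fin m → ℂ) = Pi.single j (starRingEnd ℂ cc) := by
      rw [← Pi.single_star (f := fun _ : Fin m => ℂ) j cc]; rfl
    have h2 : star ((Pi.single i (1:ℂ)) : Fin m → ℂ) = Pi.single i 1 := by
      rw [← Pi.single_star (f := fun _ : Fin m => ℂ) i (1:ℂ), star_one]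
    rw [h1, h2, Matrix.mulVec_add, Matrix.mulVec_single, Matrix.mulVec_single]
    simp only [add_dotProduct, dotProduct_add, single_dotProduct]
    simp only [Pi.add_apply, mul_one, Pi.smul_apply, Matrix.col_apply, MulOpposite.smul_eq_mul_unop,
      MulOpposite.unop_op]
    rw [hjj]
    ring
  have hq2 : star x ⬝ᵥ M *ᵥ x = M i i - 2 * (t:ℂ) * (Complex.normSq (M i j) : ℂ) := by
    rw [hq, hMji, hcc]
    have h1 : (starRingEnd ℂ) (M i j) * M i j = (Complex.normSq (M i j) : ℂ) := by
      rw [mul_comm]; exact Complex.mul_conj _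
    calc (starRingEnd ℂ) (-(t:ℂ) * starRingEnd ℂ (M i j)) * starRingEnd ℂ (M i j)
        + (-(t:ℂ) * starRingEnd ℂ (M i j)) * M i j + M i i
        = -((t:ℂ) * (M i j * starRingEnd ℂ (M i j)))
            - (t:ℂ) * ((starRingEnd ℂ) (M i j) * M i j) + M i i := by
          rw [_root_.map_mul, _root_.map_neg, Complex.conj_conj, Complex.conj_ofReal]; ring
      _ = M i i - 2 * (t:ℂ) * (Complex.normSq (M i j) : ℂ) := by
          rw [Complex.mul_conj, h1]; ring
  have h3 := hM.dotProduct_mulVec_nonneg x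
  rw [hq2] at h3
  have h4 := (Complex.le_def.mp h3).1
  have h5 : (M i i - 2 * (t:ℂ) * (Complex.normSq (M i j) : ℂ)).re
      = (M i i).re - 2 * t * Complex.normSq (M i j) := by
    simp
  rw [h5, Complex.zero_re] at h4
  have h6 : 2 * t * Complex.normSq (M i j) = (M i i).re + 1 := by
    rw [hT]
    field_simp
  linarith

lemma psd_shift {n : ℕ} (w : ℕ → ℂ) (hw0 : w 0 = 0) :
    (1 - Umat (fun j => w (j+1)) n * (Umat (fun j => w (j+1)) n)ᴴ).PosSemidef ↔
      (1 - Umat w (n+1) * (Umat w (n+1))ᴴ).PosSemidef := by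
  rw [psd_one_sub_iff, psd_one_sub_iff]
  set V := Umat (fun j => w (j+1)) n with hV
  set W := Umat w (n+1) with hW
  have hWV : ∀ (x : Fin (n+1) → ℂ) (j : Fin n),
      (Wᴴ *ᵥ x) j.castSucc = (Vᴴ *ᵥ (x ∘ Fin.succ)) j := by
    intro x j
    simp only [Matrix.mulVec, dotProduct, Matrix.conjTranspose_apply]
    rw [Fin.sum_univ_succ]
    have h0 : W 0 j.castSucc = 0 := by
      simp only [hW, Umat_apply]
      split
      · simpa using hw0
      · rfl
    rw [h0, star_zero, zero_mul, zero_add]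
    refine Finset.sum_congr rfl fun i _ => ?_
    have hWe : W i.succ j.castSucc = V i j := by
      simp only [hW, hV, Umat_apply, Fin.val_succ, Fin.coe_castSucc]
      by_cases hji : (j:ℕ) ≤ (i:ℕ)
      · rw [if_pos (by omega), if_pos hji]
        congr 1
        omega
      · by_cases hj2 : (j:ℕ) = (i:ℕ) + 1
        · rw [if_pos (by omega), if_neg hji]
          have : (i:ℕ) + 1 - (j:ℕ) = 0 := by omega
          rw [this]; exact hw0
        · rw [if_neg (by omega), if_neg hji]
    rw [hWe]
    rfl
  have hlast : ∀ x : Fin (n+1) → ℂ, (Wᴴ *ᵥ x) (Fin.last n) = 0 := by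
    intro x
    simp only [Matrix.mulVec, dotProduct, Matrix.conjTranspose_apply]
    refine Finset.sum_eq_zero fun i _ => ?_
    have h0 : W i (Fin.last n) = 0 := by
      simp only [hW, Umat_apply, Fin.val_last]
      split
      · have h1 : (i:ℕ) - n = 0 := by omega
        rw [h1]; exact hw0
      · rfl
    rw [h0, star_zero, zero_mul]
  have hquad : ∀ x : Fin (n+1) → ℂ, star (Wᴴ *ᵥ x) ⬝ᵥ (Wᴴ *ᵥ x)
      = star (Vᴴ *ᵥ (x ∘ Fin.succ)) ⬝ᵥ (Vᴴ *ᵥ (x ∘ Fin.succ)) := by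
    intro x
    simp only [dotProduct, Pi.star_apply]
    rw [Fin.sum_univ_castSucc, hlast x, star_zero, zero_mul, add_zero]
    exact Finset.sum_congr rfl fun j _ => by rw [hWV x j]
  have hxq : ∀ x : Fin (n+1) → ℂ, star x ⬝ᵥ x
      = star (x 0) * x 0 + star (x ∘ Fin.succ) ⬝ᵥ (x ∘ Fin.succ) := by
    intro x
    simp only [dotProduct, Pi.star_apply]
    rw [Fin.sum_univ_succ]
    rfl
  constructor
  · intro h x
    rw [hquad x, hxq x]
    calc star (Vᴴ *ᵥ (x ∘ Fin.succ)) ⬝ᵥ (Vᴴ *ᵥ (x ∘ Fin.succ))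
        ≤ star (x ∘ Fin.succ) ⬝ᵥ (x ∘ Fin.succ) := h _
      _ ≤ star (x 0) * x 0 + star (x ∘ Fin.succ) ⬝ᵥ (x ∘ Fin.succ) :=
          le_add_of_nonneg_left (star_mul_self_nonneg _)
  · intro h x'
    have h2 := h (Fin.cons 0 x')
    have hc : (Fin.cons (0:ℂ) x') ∘ Fin.succ = x' := by
      funext i; simp
    rw [hquad, hxq, hc] at h2
    simpa using h2

/-! ### Assembly lemmas -/

lemma mem_unitDisk {z : ℂ} : z ∈ unitDisk ↔ ‖z‖ < 1 := by
  simp [unitDisk, Metric.mem_ball, Complex.dist_eq]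

lemma zero_mem_unitDisk : (0:ℂ) ∈ unitDisk := Metric.mem_ball_self one_pos

lemma tcoef_zero' (f : ℂ → ℂ) : tcoef f 0 0 = f 0 := by
  simp [tcoef]

lemma mobius_abs_le {u v : ℂ} (hu : ‖u‖ ≤ 1) (hv : ‖v‖ < 1) :
    ‖u - v‖ ≤ ‖1 - (starRingEnd ℂ v) * u‖ := by
  have h1 : Complex.normSq u ≤ 1 := by
    rw [← Complex.sq_norm]
    nlinarith [norm_nonneg u]
  have h2 : Complex.normSq v ≤ 1 := by
    rw [← Complex.sq_norm]
    nlinarith [norm_nonneg v]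
  have key : Complex.normSq (1 - (starRingEnd ℂ v) * u) - Complex.normSq (u - v)
      = (1 - Complex.normSq u) * (1 - Complex.normSq v) := by
    simp only [Complex.normSq_apply, Complex.sub_re, Complex.sub_im, Complex.mul_re,
      Complex.mul_im, Complex.one_re, Complex.one_im, Complex.conj_re, Complex.conj_im]
    ring
  have h3 : 0 ≤ (1 - Complex.normSq u) * (1 - Complex.normSq v) :=
    mul_nonneg (by linarith) (by linarith)
  rw [Complex.norm_def, Complex.norm_def]
  exact Real.sqrt_le_sqrt (by linarith)

lemma UUH_i0 {m : ℕ} (s : ℕ → ℂ) (i : Fin (m+1)) :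
    (Umat s (m+1) * (Umat s (m+1))ᴴ) i 0 = s (i:ℕ) * starRingEnd ℂ (s 0) := by
  rw [Matrix.mul_apply]
  rw [Finset.sum_eq_single (0 : Fin (m+1))]
  · simp [Umat_apply, Matrix.conjTranspose_apply]
  · intro k _ hk
    have hk' : ¬ ((k:ℕ) ≤ ((0 : Fin (m+1)):ℕ)) := by
      simp only [Fin.val_zero, Nat.le_zero]
      intro hc
      exact hk (Fin.ext (by simp [hc]))
    have h0 : Umat s (m+1) ((0 : Fin (m+1))) k = 0 := by
      rw [Umat_apply, if_neg hk']
    rw [Matrix.conjTranspose_apply, h0, star_zero, mul_zero]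
  · intro h
    exact absurd (Finset.mem_univ _) h

lemma abs_s0_le_one {m : ℕ} {s : ℕ → ℂ}
    (h : (1 - Umat s (m+1) * (Umat s (m+1))ᴴ).PosSemidef) :
    ‖s 0‖ ≤ 1 := by
  have hq := h.dotProduct_mulVec_nonneg (Pi.single 0 1)
  rw [quad_single] at hq
  rw [Matrix.sub_apply, Matrix.one_apply_eq, UUH_i0] at hq
  have h2 : s ((((0 : Fin (m+1))):ℕ)) = s 0 := by norm_num
  rw [h2, Complex.mul_conj] at hq
  have h3 := (Complex.le_def.mp hq).1
  simp only [Complex.zero_re, Complex.sub_re, Complex.one_re, Complex.ofReal_re] at h3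
  rw [Complex.norm_def]
  exact Real.sqrt_le_one.mpr (by linarith)

lemma bridge {n : ℕ} (s w : ℕ → ℂ) (hw0 : w 0 = 0) (habs : ‖s 0‖ < 1)
    (hk : ∀ k ≤ n, cseq s (fun j => (if j = 0 then 1 else 0) + starRingEnd ℂ (s 0) * w j) k
        = (if k = 0 then s 0 else 0) + w k) :
    (1 - Umat s (n+1) * (Umat s (n+1))ᴴ).PosSemidef ↔
      (1 - Umat (fun j => w (j+1)) n * (Umat (fun j => w (j+1)) n)ᴴ).PosSemidef := by
  have hadd := Umat_add (n := n+1) (fun j => if j = 0 then (1:ℂ) else 0)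
    (fun j => starRingEnd ℂ (s 0) * w j)
  have hsmul := Umat_smul (n := n+1) (starRingEnd ℂ (s 0)) w
  have hdelta1 := Umat_delta (n := n+1) (1:ℂ)
  have hE : Umat (fun j => (if j = 0 then (1:ℂ) else 0) + starRingEnd ℂ (s 0) * w j) (n+1)
      = 1 + starRingEnd ℂ (s 0) • Umat w (n+1) := by
    rw [hadd, hsmul, hdelta1, one_smul]
  have hUE : Umat s (n+1) *
      Umat (fun j => (if j = 0 then (1:ℂ) else 0) + starRingEnd ℂ (s 0) * w j) (n+1)
      = s 0 • 1 + Umat w (n+1) := by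
    rw [Umat_mul]
    have hcongr := Umat_congr (n := n+1)
      (s := cseq s (fun j => (if j = 0 then (1:ℂ) else 0) + starRingEnd ℂ (s 0) * w j))
      (t := fun k => (if k = 0 then s 0 else 0) + w k) (fun k hk' => hk k (by omega))
    rw [hcongr, Umat_add (n := n+1) (fun k => if k = 0 then s 0 else 0) w, Umat_delta]
  have hEU : Umat (fun j => (if j = 0 then (1:ℂ) else 0) + starRingEnd ℂ (s 0) * w j) (n+1) *
      Umat s (n+1) = starRingEnd ℂ (starRingEnd ℂ (s 0)) • 1 + Umat w (n+1) := by
    rw [Umat_comm, hUE, Complex.conj_conj]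
  have hkey := key_identity (Umat s (n+1))
    (Umat (fun j => (if j = 0 then (1:ℂ) else 0) + starRingEnd ℂ (s 0) * w j) (n+1))
    (Umat w (n+1)) (starRingEnd ℂ (s 0)) hE hEU
  have hdet : IsUnit
      ((Umat (fun j => (if j = 0 then (1:ℂ) else 0) + starRingEnd ℂ (s 0) * w j) (n+1))).det := by
    rw [Umat_det]
    have h0 : ((if (0:ℕ) = 0 then (1:ℂ) else 0) + starRingEnd ℂ (s 0) * w 0) = 1 := by
      simp [hw0]
    rw [h0, one_pow]
    exact isUnit_one
  have hscal : (1 : ℂ) - starRingEnd ℂ (s 0) * starRingEnd ℂ (starRingEnd ℂ (s 0))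
      = ((1 - Complex.normSq (s 0) : ℝ) : ℂ) := by
    rw [Complex.conj_conj, mul_comm, Complex.mul_conj]
    push_cast
    ring
  have hpos : 0 < 1 - Complex.normSq (s 0) := by
    have h := Complex.sq_norm (s 0)
    nlinarith [norm_nonneg (s 0)]
  rw [← psd_conj_iff
    (Umat (fun j => (if j = 0 then (1:ℂ) else 0) + starRingEnd ℂ (s 0) * w j) (n+1)) hdet,
    hkey, hscal, psd_smul_iff hpos, ← psd_shift w hw0]

lemma cseq_congr_left {n : ℕ} {t s e : ℕ → ℂ} (h : ∀ j ≤ n, t j = s j) {k : ℕ} (hk : k ≤ n) :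
    cseq t e k = cseq s e k := by
  rw [cseq, cseq]
  refine Finset.sum_congr rfl fun j hj => ?_
  rw [h j (le_trans (Nat.lt_succ_iff.mp (Finset.mem_range.mp hj)) hk)]

lemma base_case (s : ℕ → ℂ) :
    (∃ f ∈ SchurClass, ∀ j < 1, iteratedDeriv j f 0 / (Nat.factorial j : ℂ) = s j) ↔
      (1 - Umat s 1 * (Umat s 1)ᴴ).PosSemidef := by
  constructor
  · rintro ⟨f, hfS, hco⟩
    have h0 : f 0 = s 0 := by
      have h := hco 0 one_pos
      rwa [iteratedDeriv_zero, Nat.factorial_zero, Nat.cast_one, div_one] at h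
    have habs : ‖s 0‖ ≤ 1 := h0 ▸ hfS.2 0 zero_mem_unitDisk
    have hnsq : Complex.normSq (s 0) ≤ 1 := by
      rw [← Complex.sq_norm]; nlinarith [norm_nonneg (s 0)]
    refine .of_dotProduct_mulVec_nonneg (Matrix.isHermitian_one.sub (Matrix.isHermitian_mul_conjTranspose_self _))
      (fun x => ?_)
    have hent : (1 - Umat s 1 * (Umat s 1)ᴴ) 0 0 = ((1 - Complex.normSq (s 0) : ℝ) : ℂ) := by
      rw [Matrix.sub_apply, Matrix.one_apply_eq, UUH_i0 (m := 0)]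
      have h2 : s (((0 : Fin 1):ℕ)) = s 0 := by norm_num
      rw [h2, Complex.mul_conj]
      push_cast
      ring
    have hq : star x ⬝ᵥ ((1 - Umat s 1 * (Umat s 1)ᴴ) *ᵥ x)
        = star (x 0) * ((1 - Umat s 1 * (Umat s 1)ᴴ) 0 0 * x 0) := by
      simp [Matrix.mulVec, dotProduct, Fin.sum_univ_one]
    rw [hq, hent]
    have h3 : star (x 0) * (((1 - Complex.normSq (s 0) : ℝ) : ℂ) * x 0)
        = ((1 - Complex.normSq (s 0) : ℝ) : ℂ) * (star (x 0) * x 0) := by ring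
    rw [h3]
    exact mul_nonneg (Complex.zero_le_real.mpr (by linarith)) (star_mul_self_nonneg _)
  · intro h
    have habs := abs_s0_le_one (m := 0) h
    refine ⟨fun _ => s 0, ⟨differentiableOn_const _, fun z _ => habs⟩, ?_⟩
    intro j hj
    interval_cases j
    rw [iteratedDeriv_zero, Nat.factorial_zero, Nat.cast_one, div_one]

lemma forward_step (n : ℕ)
    (ihf : ∀ s' : ℕ → ℂ,
      (∃ f ∈ SchurClass, ∀ j < n, iteratedDeriv j f 0 / (Nat.factorial j : ℂ) = s' j) →
        (1 - Umat s' n * (Umat s' n)ᴴ).PosSemidef)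
    (s : ℕ → ℂ)
    (hex : ∃ f ∈ SchurClass, ∀ j < n + 1, iteratedDeriv j f 0 / (Nat.factorial j : ℂ) = s j) :
    (1 - Umat s (n+1) * (Umat s (n+1))ᴴ).PosSemidef := by
  obtain ⟨f, hfS, hco⟩ := hex
  have hfd : DifferentiableOn ℂ f (ball (0:ℂ) 1) := hfS.1
  have hfb : ∀ z ∈ ball (0:ℂ) 1, ‖f z‖ ≤ 1 := hfS.2
  have hco' : ∀ j ≤ n, tcoef f 0 j = s j := fun j hj => hco j (by omega)
  have hf0 : f 0 = s 0 := by rw [← tcoef_zero' f]; exact hco' 0 (Nat.zero_le n)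
  have habs0 : ‖s 0‖ ≤ 1 := hf0 ▸ hfb 0 (Metric.mem_ball_self one_pos)
  by_cases hcase : ‖s 0‖ = 1
  · have hconst : ∀ z ∈ ball (0:ℂ) 1, f z = s 0 := by
      have hmax : IsMaxOn (norm ∘ f) (ball (0:ℂ) 1) 0 := by
        intro z hz
        show ‖f z‖ ≤ ‖f 0‖
        rw [hf0, hcase]
        exact hfb z hz
      have heq := Complex.eqOn_of_isPreconnected_of_isMaxOn_norm
        (convex_ball (0:ℂ) 1).isPreconnected Metric.isOpen_ball hfd
        (Metric.mem_ball_self one_pos) hmax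
      intro z hz
      have h2 := heq hz
      simpa [hf0] using h2
    have htc := tcoef_of_eqOn_const one_pos hfd hconst
    have hsk : ∀ k < n+1, s k = (fun k => if k = 0 then s 0 else 0) k := by
      intro k hk
      rw [← hco' k (by omega), htc]
    have hU : Umat s (n+1) = s 0 • (1 : Matrix (Fin (n+1)) (Fin (n+1)) ℂ) := by
      rw [Umat_congr hsk, Umat_delta]
    rw [hU]
    have hz : (1 : Matrix (Fin (n+1)) (Fin (n+1)) ℂ)
        - (s 0 • 1) * (s 0 • 1)ᴴ = 0 := by
      rw [Matrix.conjTranspose_smul, Matrix.conjTranspose_one, Matrix.smul_mul,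
        Matrix.mul_smul, Matrix.one_mul, smul_smul]
      have h1 : s 0 * star (s 0) = 1 := by
        rw [Complex.star_def, Complex.mul_conj, Complex.normSq_eq_norm_sq, hcase]
        norm_num
      rw [h1, one_smul, sub_self]
    rw [hz]
    exact Matrix.PosSemidef.zero
  · have habs0' : ‖s 0‖ < 1 := lt_of_le_of_ne habs0 hcase
    have habsc : ‖starRingEnd ℂ (s 0)‖ = ‖s 0‖ := Complex.norm_conj _
    have hden : ∀ z ∈ ball (0:ℂ) 1, (1:ℂ) - starRingEnd ℂ (s 0) * f z ≠ 0 := by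
      intro z hz hzero
      have h1 : ‖starRingEnd ℂ (s 0) * f z‖ < 1 := by
        rw [norm_mul, habsc]
        calc ‖s 0‖ * ‖f z‖ ≤ ‖s 0‖ * 1 :=
              mul_le_mul_of_nonneg_left (hfb z hz) (norm_nonneg _)
          _ < 1 := by rwa [mul_one]
      rw [sub_eq_zero] at hzero
      rw [← hzero] at h1
      simp at h1
    set hfn : ℂ → ℂ := fun z => (f z - s 0) / (1 - starRingEnd ℂ (s 0) * f z) with hhfn
    have hhd : DifferentiableOn ℂ hfn (ball (0:ℂ) 1) := by
      refine DifferentiableOn.div (hfd.sub_const (s 0)) ?_ hden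
      exact (differentiableOn_const (1:ℂ)).sub ((differentiableOn_const _).mul hfd)
    have hh0 : hfn 0 = 0 := by
      show (f 0 - s 0) / _ = 0
      rw [hf0, sub_self, zero_div]
    have hh1 : ∀ z ∈ ball (0:ℂ) 1, ‖hfn z‖ ≤ 1 := by
      intro z hz
      have h1 := mobius_abs_le (hfb z hz) habs0'
      show ‖(f z - s 0) / (1 - starRingEnd ℂ (s 0) * f z)‖ ≤ 1
      rw [norm_div]
      exact div_le_one_of_le₀ h1 (norm_nonneg _)
    set g : ℂ → ℂ := dslope hfn 0 with hg
    have hgd : DifferentiableOn ℂ g (ball (0:ℂ) 1) :=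
      (differentiableOn_dslope
        (Metric.isOpen_ball.mem_nhds (Metric.mem_ball_self one_pos))).mpr hhd
    have hgb : ∀ z ∈ ball (0:ℂ) 1, ‖g z‖ ≤ 1 := by
      intro z hz
      have hεbound : ∀ ε : ℝ, 0 < ε → ‖g z‖ ≤ 1 + ε := by
        intro ε hε
        have hmaps : Set.MapsTo hfn (ball (0:ℂ) 1) (ball (hfn 0) (1+ε)) := by
          intro y hy
          rw [hh0, Metric.mem_ball, Complex.dist_eq, sub_zero]
          exact lt_of_le_of_lt (hh1 y hy) (by linarith)
        have h2 := Complex.norm_dslope_le_div_of_mapsTo_ball hhd (hmaps.mono_right Metric.ball_subset_closedBall) hz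
        rw [div_one] at h2
        exact h2
      refine le_of_forall_pos_lt_add fun ε hε => ?_
      calc ‖g z‖ ≤ 1 + ε/2 := hεbound (ε/2) (by linarith)
        _ < 1 + ε := by linarith
    have hzg : ∀ z ∈ ball (0:ℂ) 1, z * g z = hfn z := by
      intro z hz
      by_cases hz0 : z = 0
      · subst hz0
        rw [zero_mul, hh0]
      · rw [hg, dslope_of_ne _ hz0, slope_def_field, hh0, sub_zero, sub_zero]
        field_simp
    have hid : ∀ z ∈ ball (0:ℂ) 1,
        f z * (1 + starRingEnd ℂ (s 0) * (z * g z)) = s 0 + z * g z := by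
      intro z hz
      rw [hzg z hz]
      have h1 : hfn z * (1 - starRingEnd ℂ (s 0) * f z) = f z - s 0 :=
        div_mul_cancel₀ _ (hden z hz)
      linear_combination -h1
    have hrel := coeffRel one_pos hfd hgd (starRingEnd ℂ (s 0)) (s 0) hid
    have hw0 : wseq g 0 = 0 := by simp [wseq]
    have hk : ∀ k ≤ n,
        cseq s (fun j => (if j = 0 then 1 else 0) + starRingEnd ℂ (s 0) * wseq g j) k
        = (if k = 0 then s 0 else 0) + wseq g k := by
      intro k hk
      rw [← hrel k]
      exact (cseq_congr_left hco' hk).symm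
    rw [bridge s (wseq g) hw0 habs0' hk]
    have hfun : (fun j => wseq g (j+1)) = tcoef g 0 := by
      funext j; simp [wseq]
    rw [hfun]
    exact ihf (tcoef g 0) ⟨g, ⟨hgd, hgb⟩, fun j _ => rfl⟩

lemma backward_step (n : ℕ)
    (ihb : ∀ s' : ℕ → ℂ, (1 - Umat s' n * (Umat s' n)ᴴ).PosSemidef →
      ∃ f ∈ SchurClass, ∀ j < n, iteratedDeriv j f 0 / (Nat.factorial j : ℂ) = s' j)
    (s : ℕ → ℂ) (hpsd : (1 - Umat s (n+1) * (Umat s (n+1))ᴴ).PosSemidef) :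
    ∃ f ∈ SchurClass, ∀ j < n + 1, iteratedDeriv j f 0 / (Nat.factorial j : ℂ) = s j := by
  have habs0 : ‖s 0‖ ≤ 1 := abs_s0_le_one hpsd
  by_cases hcase : ‖s 0‖ = 1
  · have hM00 : (1 - Umat s (n+1) * (Umat s (n+1))ᴴ) 0 0 = 0 := by
      rw [Matrix.sub_apply, Matrix.one_apply_eq, UUH_i0]
      have h2 : s (((0 : Fin (n+1)):ℕ)) = s 0 := by norm_num
      rw [h2, Complex.mul_conj, Complex.normSq_eq_norm_sq, hcase]
      norm_num
    have hsj : ∀ j, 1 ≤ j → j ≤ n → s j = 0 := by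
      intro j h1 h2
      have hine : (⟨j, by omega⟩ : Fin (n+1)) ≠ 0 := by
        intro hc
        have h := congrArg Fin.val hc
        simp at h
        omega
      have hrow := psd_row_zero hpsd ⟨j, by omega⟩ 0 hM00
      rw [Matrix.sub_apply, Matrix.one_apply_ne hine, UUH_i0, zero_sub, neg_eq_zero] at hrow
      have h4 : starRingEnd ℂ (s 0) ≠ 0 := by
        intro hc
        have h5 := congrArg norm hc
        rw [Complex.norm_conj, hcase, norm_zero] at h5
        norm_num at h5
      rcases mul_eq_zero.mp hrow with h5 | h5
      · exact h5
      · exact absurd h5 h4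
    refine ⟨fun _ => s 0, ⟨differentiableOn_const _, fun z _ => le_of_eq hcase⟩, ?_⟩
    intro j hj
    rcases Nat.eq_zero_or_pos j with hj0 | hj1
    · subst hj0
      rw [iteratedDeriv_zero, Nat.factorial_zero, Nat.cast_one, div_one]
    · have hdc : DifferentiableOn ℂ (fun _ : ℂ => s 0) (ball (0:ℂ) (1:ℝ)) :=
        differentiableOn_const _
      have htc := tcoef_of_eqOn_const one_pos hdc (fun z _ => rfl)
      have h5 : tcoef (fun _ : ℂ => s 0) 0 j = 0 := by
        rw [htc]
        exact if_neg (by omega)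
      have h6 : iteratedDeriv j (fun _ : ℂ => s 0) 0 / (Nat.factorial j : ℂ)
          = tcoef (fun _ : ℂ => s 0) 0 j := rfl
      rw [h6, h5, hsj j hj1 (by omega)]
  · have habs0' : ‖s 0‖ < 1 := lt_of_le_of_ne habs0 hcase
    set p : ℂ → ℂ := fun z => ∑ j ∈ Finset.range (n+1), s j * z ^ j with hp
    have hpd : Differentiable ℂ p := Differentiable.fun_sum fun j _ =>
      (differentiable_const _).mul (differentiable_pow j)
    have hp0 : p 0 = s 0 := by
      rw [hp]
      show (∑ j ∈ Finset.range (n+1), s j * (0:ℂ) ^ j) = s 0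
      rw [Finset.sum_eq_single 0]
      · norm_num
      · intro b _ hb
        simp [zero_pow hb]
      · intro hh
        exact absurd (Finset.mem_range.mpr (by omega)) hh
    have hne0 : (1:ℂ) - starRingEnd ℂ (s 0) * p 0 ≠ 0 := by
      rw [hp0]
      intro hc
      rw [sub_eq_zero] at hc
      have h1 := congrArg norm hc
      rw [norm_one, norm_mul, Complex.norm_conj] at h1
      nlinarith [norm_nonneg (s 0)]
    have hcont : ContinuousAt (fun z => (1:ℂ) - starRingEnd ℂ (s 0) * p z) 0 :=
      (continuous_const.sub (continuous_const.mul hpd.continuous)).continuousAt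
    have hev := hcont.eventually_ne hne0
    rw [Metric.eventually_nhds_iff_ball] at hev
    obtain ⟨r, hr0, hrb⟩ := hev
    set hP : ℂ → ℂ := fun z => (p z - s 0) / (1 - starRingEnd ℂ (s 0) * p z) with hhP
    have hPd : DifferentiableOn ℂ hP (ball (0:ℂ) r) := by
      refine DifferentiableOn.div ((hpd.differentiableOn).sub_const (s 0)) ?_ hrb
      exact (differentiableOn_const _).sub ((differentiableOn_const _).mul hpd.differentiableOn)
    have hP0 : hP 0 = 0 := by
      show (p 0 - s 0) / _ = 0
      rw [hp0, sub_self, zero_div]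
    set gP : ℂ → ℂ := dslope hP 0 with hgP
    have hgPd : DifferentiableOn ℂ gP (ball (0:ℂ) r) :=
      (differentiableOn_dslope
        (Metric.isOpen_ball.mem_nhds (Metric.mem_ball_self hr0))).mpr hPd
    have hzgP : ∀ z ∈ ball (0:ℂ) r, z * gP z = hP z := by
      intro z hz
      by_cases hz0 : z = 0
      · subst hz0
        rw [zero_mul, hP0]
      · rw [hgP, dslope_of_ne _ hz0, slope_def_field, hP0, sub_zero, sub_zero]
        field_simp
    have hidP : ∀ z ∈ ball (0:ℂ) r,
        p z * (1 + starRingEnd ℂ (s 0) * (z * gP z)) = s 0 + z * gP z := by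
      intro z hz
      rw [hzgP z hz]
      have h1 : hP z * (1 - starRingEnd ℂ (s 0) * p z) = p z - s 0 :=
        div_mul_cancel₀ _ (hrb z hz)
      linear_combination -h1
    have hrelP := coeffRel hr0 hpd.differentiableOn hgPd (starRingEnd ℂ (s 0)) (s 0) hidP
    have hw0 : wseq gP 0 = 0 := by simp [wseq]
    have htp := tcoef_poly (n := n) s
    rw [← hp] at htp
    have htps : ∀ j ≤ n, tcoef p 0 j = s j := by
      intro j hj
      rw [htp]
      simp only []
      exact if_pos hj
    have hkseq : ∀ k ≤ n,
        cseq s (fun j => (if j = 0 then 1 else 0) + starRingEnd ℂ (s 0) * wseq gP j) k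
        = (if k = 0 then s 0 else 0) + wseq gP k := by
      intro k hk
      rw [← hrelP k]
      exact (cseq_congr_left htps hk).symm
    have hbridge := bridge s (wseq gP) hw0 habs0' hkseq
    have hVpsd := hbridge.mp hpsd
    obtain ⟨g, hgS, hgco⟩ := ihb (fun j => wseq gP (j+1)) hVpsd
    have hgd : DifferentiableOn ℂ g (ball (0:ℂ) 1) := hgS.1
    have hgb : ∀ z ∈ ball (0:ℂ) 1, ‖g z‖ ≤ 1 := hgS.2
    have hgco' : ∀ j < n, tcoef g 0 j = wseq gP (j+1) := hgco
    set f : ℂ → ℂ := fun z => (s 0 + z * g z) / (1 + starRingEnd ℂ (s 0) * (z * g z)) with hf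
    have hzgabs : ∀ z ∈ ball (0:ℂ) 1, ‖z * g z‖ < 1 := by
      intro z hz
      have hz1 : ‖z‖ < 1 := by
        simpa [Metric.mem_ball, Complex.dist_eq] using hz
      rw [norm_mul]
      calc ‖z‖ * ‖g z‖ ≤ ‖z‖ * 1 :=
            mul_le_mul_of_nonneg_left (hgb z hz) (norm_nonneg z)
        _ < 1 := by rwa [mul_one]
    have hfden : ∀ z ∈ ball (0:ℂ) 1, (1:ℂ) + starRingEnd ℂ (s 0) * (z * g z) ≠ 0 := by
      intro z hz hc
      have h1 : ‖starRingEnd ℂ (s 0) * (z * g z)‖ < 1 := by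
        rw [norm_mul, Complex.norm_conj]
        calc ‖s 0‖ * ‖z * g z‖
            ≤ 1 * ‖z * g z‖ :=
              mul_le_mul_of_nonneg_right habs0 (norm_nonneg _)
          _ < 1 := by rw [one_mul]; exact hzgabs z hz
      have h2 : starRingEnd ℂ (s 0) * (z * g z) = -1 := by linear_combination hc
      rw [h2] at h1
      simp at h1
    have hfd : DifferentiableOn ℂ f (ball (0:ℂ) 1) := by
      refine DifferentiableOn.div ?_ ?_ hfden
      · exact (differentiableOn_const _).add (differentiableOn_id.mul hgd)
      · exact (differentiableOn_const _).add
          ((differentiableOn_const _).mul (differentiableOn_id.mul hgd))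
    have hfb : ∀ z ∈ ball (0:ℂ) 1, ‖f z‖ ≤ 1 := by
      intro z hz
      show ‖(s 0 + z * g z) / (1 + starRingEnd ℂ (s 0) * (z * g z))‖ ≤ 1
      rw [norm_div]
      refine div_le_one_of_le₀ ?_ (norm_nonneg _)
      have hv : ‖-(z * g z)‖ < 1 := by
        rw [norm_neg]
        exact hzgabs z hz
      have h1 := mobius_abs_le habs0 hv
      have h2 : ‖(1:ℂ) - starRingEnd ℂ (-(z * g z)) * s 0‖
          = ‖1 + starRingEnd ℂ (s 0) * (z * g z)‖ := by
        rw [← Complex.norm_conj ((1:ℂ) - starRingEnd ℂ (-(z * g z)) * s 0)]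
        congr 1
        rw [_root_.map_sub, _root_.map_one, _root_.map_mul, Complex.conj_conj]
        ring
      have h3 : s 0 + z * g z = s 0 - -(z * g z) := by ring
      rw [h3]
      rw [← h2]
      exact h1
    have hidF : ∀ z ∈ ball (0:ℂ) 1,
        f z * (1 + starRingEnd ℂ (s 0) * (z * g z)) = s 0 + z * g z :=
      fun z hz => div_mul_cancel₀ _ (hfden z hz)
    have hrelF := coeffRel one_pos hfd hgd (starRingEnd ℂ (s 0)) (s 0) hidF
    have hww : ∀ k, k ≤ n → wseq g k = wseq gP k := by
      intro k hk
      cases k with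
      | zero => simp [wseq]
      | succ m =>
        have hm : m < n := by omega
        have e1 : wseq g (m+1) = tcoef g 0 m := by
          simp [wseq]
        rw [e1, hgco' m hm]
    have hfinal : ∀ i, i ≤ n → tcoef f 0 i = s i := by
      intro i
      induction i using Nat.strong_induction_on with
      | _ i ihi =>
        intro hi
        have hF := hrelF i
        have hS := hkseq i hi
        rw [cseq_delta_expand] at hF hS
        have hsum : ∑ k ∈ Finset.range (i+1), tcoef f 0 k * wseq g (i-k)
            = ∑ k ∈ Finset.range (i+1), s k * wseq gP (i-k) := by
          refine Finset.sum_congr rfl fun k hk => ?_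
          have hk' : k ≤ i := Nat.lt_succ_iff.mp (Finset.mem_range.mp hk)
          by_cases hki : k = i
          · subst hki
            rw [Nat.sub_self]
            simp [wseq]
          · rw [ihi k (lt_of_le_of_ne hk' hki) (by omega), hww (i-k) (by omega)]
        rw [hsum, hww i hi] at hF
        have h7 := hF.trans hS.symm
        exact add_right_cancel h7
    exact ⟨f, ⟨hfd, hfb⟩, fun j hj => hfinal j (by omega)⟩


end SchurAux

/-- **Schur's theorem.** There is a Schur-class function with prescribed Taylor
coefficients `s_0, …, s_{n−1}` at the origin iff `I − U^s_n (U^s_n)^*` is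
positive semidefinite. -/
theorem schur_taylor_coefficient_criterion (n : ℕ) (hn : 1 ≤ n) (s : ℕ → ℂ) :
    (∃ f ∈ SchurClass, ∀ j < n, iteratedDeriv j f 0 / (Nat.factorial j : ℂ) = s j) ↔
      (1 - Umat s n * (Umat s n)ᴴ).PosSemidef := by
  induction n, hn using Nat.le_induction generalizing s with
  | base => exact SchurAux.base_case s
  | succ n hn ih =>
    constructor
    · exact SchurAux.forward_step n (fun s' h => (ih s').mp h) s
    · exact SchurAux.backward_step n (fun s' h => (ih s').mpr h) s
end
end

section
/- Let t_0 ∈ 𝕋, N ≥ 0 and s_0, …, s_N ∈ ℂ. (i) If the problem BP_N has a solution f ∈ 𝒮, then |s_0| ≤ 1. (ii) If |s_0| < 1, then the problem BP_N has a solution. -/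
open Complex Filter Matrix Metric Set Asymptotics
open scoped ComplexConjugate ComplexOrder Topology

noncomputable section

/-! ### Auxiliary material for the proof -/

lemma bp_entire_deriv {f : ℂ → ℂ} (hf : Differentiable ℂ f) : Differentiable ℂ (deriv f) :=
  ((contDiff_infty_iff_deriv.mp hf.contDiff).2).differentiable (by simp)

lemma bp_iter_add (a : ℂ) (k : ℕ) {f g : ℂ → ℂ} (hf : Differentiable ℂ f)
    (hg : Differentiable ℂ g) :
    iteratedDeriv k (f + g) a = iteratedDeriv k f a + iteratedDeriv k g a := by
  simp only [← iteratedDerivWithin_univ]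
  exact iteratedDerivWithin_add (Set.mem_univ a) uniqueDiffOn_univ
    hf.contDiff.contDiffWithinAt hg.contDiff.contDiffWithinAt

lemma bp_iter_cmul (a c : ℂ) (k : ℕ) {g : ℂ → ℂ} (hg : Differentiable ℂ g) :
    iteratedDeriv k (fun z => c * g z) a = c * iteratedDeriv k g a := by
  simp only [← iteratedDerivWithin_univ]
  exact iteratedDerivWithin_const_mul (Set.mem_univ a) uniqueDiffOn_univ c
    hg.contDiff.contDiffWithinAt

lemma bp_iter_zero_fun (k : ℕ) : iteratedDeriv k (fun _ : ℂ => (0 : ℂ)) = fun _ => 0 := by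
  induction k with
  | zero => simp [iteratedDeriv_zero]
  | succ n ih =>
    rw [iteratedDeriv_succ', show deriv (fun _ : ℂ => (0 : ℂ)) = fun _ : ℂ => (0 : ℂ) by
      funext z; simp, ih]

lemma bp_iter_sum (a : ℂ) (k : ℕ) {ι : Type*} (T : Finset ι) (F : ι → ℂ → ℂ)
    (h : ∀ i ∈ T, Differentiable ℂ (F i)) :
    iteratedDeriv k (fun z => ∑ i ∈ T, F i z) a = ∑ i ∈ T, iteratedDeriv k (F i) a := by
  classical
  induction T using Finset.induction with
  | empty => simp [bp_iter_zero_fun k]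
  | @insert i T hni ih =>
    have hsum : (fun z => ∑ j ∈ insert i T, F j z)
        = F i + fun z => ∑ j ∈ T, F j z := by
      funext z; simp [Finset.sum_insert hni]
    rw [hsum, bp_iter_add a k (h i (Finset.mem_insert_self i T))
      (Differentiable.fun_sum fun j hj => h j (Finset.mem_insert_of_mem hj)),
      ih (fun j hj => h j (Finset.mem_insert_of_mem hj)), Finset.sum_insert hni]

lemma bp_iter_exp (μ a : ℂ) (m : ℕ) :
    iteratedDeriv m (fun z => Complex.exp (μ * (z - a)))
      = fun z => μ ^ m * Complex.exp (μ * (z - a)) := by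
  induction m with
  | zero => funext z; simp [iteratedDeriv_zero]
  | succ n ih =>
    rw [iteratedDeriv_succ, ih]
    funext z
    have h2 : HasDerivAt (fun w : ℂ => μ * (w - a)) μ z := by
      simpa using ((hasDerivAt_id z).sub_const a).const_mul μ
    have h1 : HasDerivAt (fun w : ℂ => Complex.exp (μ * (w - a)))
        (Complex.exp (μ * (z - a)) * μ) z :=
      (Complex.hasDerivAt_exp (μ * (z - a))).comp z h2
    rw [deriv_const_mul _ h1.differentiableAt, h1.deriv, pow_succ]
    ring

lemma bp_iter_lin0 (a : ℂ) (h : ℂ → ℂ) :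
    iteratedDeriv 0 (fun z => (z - a) * h z) a = 0 := by
  simp [iteratedDeriv_zero]

lemma bp_iter_lin (a : ℂ) :
    ∀ (k : ℕ) {h : ℂ → ℂ}, Differentiable ℂ h →
      iteratedDeriv (k + 1) (fun z => (z - a) * h z) a
        = ((k : ℂ) + 1) * iteratedDeriv k h a := by
  intro k
  induction k with
  | zero =>
    intro h hh
    have hder : deriv (fun z => (z - a) * h z) = h + fun z => (z - a) * deriv h z := by
      funext z
      have h1 : HasDerivAt (fun w => (w - a) * h w)
          (1 * h z + (z - a) * deriv h z) z :=
        (((hasDerivAt_id z).sub_const a)).mul (hh z).hasDerivAt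
      simp only [Pi.add_apply]
      rw [h1.deriv]; ring
    rw [iteratedDeriv_succ', hder,
      bp_iter_add a 0 (f := h) (g := fun z => (z - a) * deriv h z) hh
        (by exact (differentiable_id.sub_const a).mul (bp_entire_deriv hh)),
      bp_iter_lin0 a (deriv h)]
    simp [iteratedDeriv_zero]
  | succ k ih =>
    intro h hh
    have hder : deriv (fun z => (z - a) * h z) = h + fun z => (z - a) * deriv h z := by
      funext z
      have h1 : HasDerivAt (fun w => (w - a) * h w)
          (1 * h z + (z - a) * deriv h z) z :=
        (((hasDerivAt_id z).sub_const a)).mul (hh z).hasDerivAt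
      simp only [Pi.add_apply]
      rw [h1.deriv]; ring
    rw [iteratedDeriv_succ', hder,
      bp_iter_add a (k + 1) (f := h) (g := fun z => (z - a) * deriv h z) hh
        (by exact (differentiable_id.sub_const a).mul (bp_entire_deriv hh)),
      ih (bp_entire_deriv hh), ← iteratedDeriv_succ']
    push_cast
    ring

lemma bp_iter_pow (a : ℂ) :
    ∀ (j : ℕ) {h : ℂ → ℂ}, Differentiable ℂ h →
      ((∀ m, iteratedDeriv (m + j) (fun z => (z - a) ^ j * h z) a
          = (((m + j).factorial : ℂ) / (m.factorial : ℂ)) * iteratedDeriv m h a)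
        ∧ (∀ m, m < j → iteratedDeriv m (fun z => (z - a) ^ j * h z) a = 0)) := by
  intro j
  induction j with
  | zero =>
    intro h hh
    refine ⟨fun m => ?_, fun m hm => absurd hm (Nat.not_lt_zero m)⟩
    simp only [pow_zero, one_mul, Nat.add_zero]
    rw [div_self (by exact_mod_cast (Nat.factorial_ne_zero m)), one_mul]
  | succ j ih =>
    intro h hh
    have hG : Differentiable ℂ (fun z => (z - a) ^ j * h z) :=
      ((differentiable_id.sub_const a).pow j).mul hh
    have hfun : (fun z => (z - a) ^ (j + 1) * h z)
        = fun z => (z - a) * ((z - a) ^ j * h z) := by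
      funext z; ring
    constructor
    · intro m
      rw [show m + (j + 1) = (m + j) + 1 from rfl, hfun,
        bp_iter_lin a (m + j) hG, (ih hh).1 m,
        show (m + j) + 1 = (m + (j + 1)) from rfl]
      rw [show m + (j + 1) = (m + j) + 1 from rfl, Nat.factorial_succ]
      push_cast
      ring
    · intro m hm
      cases m with
      | zero => rw [hfun]; exact bp_iter_lin0 a _
      | succ m' =>
        rw [hfun, bp_iter_lin a m' hG, (ih hh).2 m' (by omega), mul_zero]

lemma bp_iter_main (a μ : ℂ) (j k : ℕ) :
    iteratedDeriv k (fun z => (z - a) ^ j * Complex.exp (μ * (z - a))) a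
      = if j ≤ k then ((k.factorial : ℂ) / ((k - j).factorial : ℂ)) * μ ^ (k - j) else 0 := by
  have hexp : Differentiable ℂ (fun z : ℂ => Complex.exp (μ * (z - a))) :=
    ((differentiable_id.sub_const a).const_mul μ).cexp
  by_cases h : j ≤ k
  · rw [if_pos h]
    obtain ⟨m, rfl⟩ : ∃ m, k = m + j := ⟨k - j, (Nat.sub_add_cancel h).symm⟩
    rw [(bp_iter_pow a j hexp).1 m, Nat.add_sub_cancel, bp_iter_exp]
    simp
  · rw [if_neg h]
    exact (bp_iter_pow a j hexp).2 k (Nat.lt_of_not_le h)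

/-- Elementary bound `r e^{-K² r²} ≤ 1/(2K)`. -/
lemma bp_rexp_bound (r K : ℝ) (hr : 0 ≤ r) (hK : 1 ≤ K) :
    r * Real.exp (-(K ^ 2 * r ^ 2)) ≤ 1 / (2 * K) := by
  have hKpos : (0 : ℝ) < K := lt_of_lt_of_le one_pos hK
  rcases eq_or_lt_of_le hr with h0 | hrpos
  · rw [← h0, zero_mul]; positivity
  · have hexp : 2 * K * r ≤ Real.exp (K ^ 2 * r ^ 2) := by
      nlinarith [Real.add_one_le_exp (K ^ 2 * r ^ 2), sq_nonneg (K * r - 1)]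
    rw [Real.exp_neg]
    have h2Kr : (0 : ℝ) < 2 * K * r := by positivity
    calc r * (Real.exp (K ^ 2 * r ^ 2))⁻¹ ≤ r * (2 * K * r)⁻¹ := by
          apply mul_le_mul_of_nonneg_left _ hr
          exact inv_anti₀ h2Kr hexp
      _ = 1 / (2 * K) := by
          rw [mul_comm (2 * K) r, mul_inv, ← mul_assoc, mul_inv_cancel₀ hrpos.ne',
            one_mul, one_div]
  
/-- The abstract construction of a solution of `BP_N` from coefficient data. -/
lemma bp_construct (t0 : ℂ) (ht : ‖t0‖ = 1) (N : ℕ) (s : ℕ → ℂ)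
    (d : ℕ → ℂ) (K : ℕ → ℝ) (μ : ℕ → ℂ) (hK : ∀ j, 1 ≤ K j)
    (hμ : ∀ j, μ j = ((2 * (j : ℝ) * (K j) ^ 2 : ℝ) : ℂ) * conj t0)
    (hrec : ∀ k ≤ N, ∑ j ∈ Finset.range (k + 1),
      d j * (μ j) ^ (k - j) / ((k - j).factorial : ℂ) = s k)
    (hbound : ‖d 0‖
      + ∑ j ∈ Finset.range N, ‖d (j + 1)‖ * (1 / (2 * K (j + 1))) ≤ 1) :
    ∃ f, SolvesBP t0 s N f := by
  set f : ℂ → ℂ := fun z => ∑ j ∈ Finset.range (N + 1),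
    d j * ((z - t0) ^ j * Complex.exp (μ j * (z - t0))) with hf
  have hgd : ∀ j, Differentiable ℂ
      (fun z => (z - t0) ^ j * Complex.exp (μ j * (z - t0))) := fun j =>
    ((differentiable_id.sub_const t0).pow j).mul
      (((differentiable_id.sub_const t0).const_mul (μ j)).cexp)
  have htd : ∀ j, Differentiable ℂ
      (fun z => d j * ((z - t0) ^ j * Complex.exp (μ j * (z - t0)))) := fun j =>
    (hgd j).const_mul (d j)
  have hfd : Differentiable ℂ f := Differentiable.fun_sum fun j _ => htd j
  -- Taylor coefficients
  have hTay : ∀ k, k ≤ N → iteratedDeriv k f t0 = (k.factorial : ℂ) * s k := by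
    intro k hk
    have h1 : iteratedDeriv k f t0 = ∑ j ∈ Finset.range (N + 1),
        d j * iteratedDeriv k (fun z => (z - t0) ^ j * Complex.exp (μ j * (z - t0))) t0 := by
      rw [hf, bp_iter_sum t0 k _ _ (fun j _ => htd j)]
      exact Finset.sum_congr rfl fun j _ => bp_iter_cmul t0 (d j) k (hgd j)
    rw [h1]
    have h2 : ∀ j, iteratedDeriv k
        (fun z => (z - t0) ^ j * Complex.exp (μ j * (z - t0))) t0
        = if j ≤ k then ((k.factorial : ℂ) / ((k - j).factorial : ℂ)) * (μ j) ^ (k - j)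
          else 0 := fun j => bp_iter_main t0 (μ j) j k
    calc ∑ j ∈ Finset.range (N + 1),
        d j * iteratedDeriv k (fun z => (z - t0) ^ j * Complex.exp (μ j * (z - t0))) t0
        = ∑ j ∈ Finset.range (k + 1),
            d j * (((k.factorial : ℂ) / ((k - j).factorial : ℂ)) * (μ j) ^ (k - j)) := by
          rw [← Finset.sum_subset (Finset.range_subset_range.mpr (by omega) :
              Finset.range (k + 1) ⊆ Finset.range (N + 1))]
          · exact Finset.sum_congr rfl fun j hj => by
              rw [h2 j, if_pos (by simpa [Nat.lt_succ_iff] using Finset.mem_range.mp hj)]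
          · intro j _ hj
            rw [h2 j, if_neg (by simpa [Nat.lt_succ_iff] using hj), mul_zero]
      _ = (k.factorial : ℂ) * ∑ j ∈ Finset.range (k + 1),
            d j * (μ j) ^ (k - j) / ((k - j).factorial : ℂ) := by
          rw [Finset.mul_sum]
          exact Finset.sum_congr rfl fun j _ => by ring
      _ = (k.factorial : ℂ) * s k := by rw [hrec k hk]
  -- Schur class bound
  have hb : ∀ z ∈ unitDisk, ‖f z‖ ≤ 1 := by
    intro z hz
    have hzlt : ‖z‖ < 1 := by
      simpa [unitDisk, Complex.dist_eq] using hz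
    set r : ℝ := ‖z - t0‖ with hrdef
    have hr0 : 0 ≤ r := norm_nonneg _
    -- key real-part estimate
    have hX : (conj t0 * (z - t0)).re ≤ -(r ^ 2 / 2) := by
      have hnsq : Complex.normSq (z - t0)
          = Complex.normSq z + Complex.normSq t0 - 2 * (z * conj t0).re :=
        Complex.normSq_sub z t0
      have ht1 : Complex.normSq t0 = 1 := by
        rw [Complex.normSq_eq_norm_sq, ht]; norm_num
      have hz1 : Complex.normSq z ≤ 1 := by
        rw [Complex.normSq_eq_norm_sq]
        nlinarith [norm_nonneg z]
      have hr2 : r ^ 2 = Complex.normSq (z - t0) := by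
        rw [hrdef, Complex.sq_norm]
      have hexpand : (conj t0 * (z - t0)).re = (z * conj t0).re - 1 := by
        have : conj t0 * (z - t0) = z * conj t0 - t0 * conj t0 := by ring
        rw [this, Complex.sub_re, Complex.mul_conj, Complex.ofReal_re, ht1]
      rw [hexpand]
      rw [hr2, hnsq, ht1]
      linarith
    have hterm : ∀ j, ‖d j * ((z - t0) ^ j * Complex.exp (μ j * (z - t0)))‖
        ≤ ‖d j‖ * (r * Real.exp (-((K j) ^ 2 * r ^ 2))) ^ j := by
      intro j
      have hre : (μ j * (z - t0)).re ≤ -((j : ℝ) * (K j) ^ 2 * r ^ 2) := by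
        rw [hμ j, mul_assoc, Complex.re_ofReal_mul]
        have hl0 : (0 : ℝ) ≤ 2 * (j : ℝ) * (K j) ^ 2 := by positivity
        calc 2 * (j : ℝ) * (K j) ^ 2 * (conj t0 * (z - t0)).re
            ≤ 2 * (j : ℝ) * (K j) ^ 2 * (-(r ^ 2 / 2)) :=
              mul_le_mul_of_nonneg_left hX hl0
          _ = -((j : ℝ) * (K j) ^ 2 * r ^ 2) := by ring
      have habs : ‖d j * ((z - t0) ^ j * Complex.exp (μ j * (z - t0)))‖
          = ‖d j‖ * (r ^ j * Real.exp ((μ j * (z - t0)).re)) := by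
        rw [norm_mul, norm_mul, norm_pow, Complex.norm_exp, hrdef]
      rw [habs]
      have hstep : r ^ j * Real.exp ((μ j * (z - t0)).re)
          ≤ (r * Real.exp (-((K j) ^ 2 * r ^ 2))) ^ j := by
        rw [mul_pow, ← Real.exp_nat_mul]
        have : (j : ℝ) * -((K j) ^ 2 * r ^ 2) = -((j : ℝ) * (K j) ^ 2 * r ^ 2) := by ring
        rw [this]
        exact mul_le_mul_of_nonneg_left (Real.exp_le_exp.mpr hre) (pow_nonneg hr0 j)
      exact mul_le_mul_of_nonneg_left hstep (norm_nonneg _)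
    have hsum : ‖f z‖ ≤ ∑ j ∈ Finset.range (N + 1),
        ‖d j‖ * (r * Real.exp (-((K j) ^ 2 * r ^ 2))) ^ j := by
      refine le_trans (norm_sum_le _ _) ?_
      exact Finset.sum_le_sum fun j _ => hterm j
    refine le_trans hsum ?_
    rw [Finset.sum_range_succ']
    have h0term : ‖d 0‖ * (r * Real.exp (-((K 0) ^ 2 * r ^ 2))) ^ 0
        = ‖d 0‖ := by simp
    rw [h0term]
    have hjs : ∀ j ∈ Finset.range N,
        ‖d (j + 1)‖ * (r * Real.exp (-((K (j + 1)) ^ 2 * r ^ 2))) ^ (j + 1)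
        ≤ ‖d (j + 1)‖ * (1 / (2 * K (j + 1))) := by
      intro j _
      apply mul_le_mul_of_nonneg_left _ (norm_nonneg _)
      have hb1 : r * Real.exp (-((K (j + 1)) ^ 2 * r ^ 2)) ≤ 1 / (2 * K (j + 1)) :=
        bp_rexp_bound r (K (j + 1)) hr0 (hK (j + 1))
      have hpos : 0 ≤ r * Real.exp (-((K (j + 1)) ^ 2 * r ^ 2)) :=
        mul_nonneg hr0 (Real.exp_pos _).le
      have h1K : 1 / (2 * K (j + 1)) ≤ 1 := by
        rw [div_le_one (by linarith [hK (j + 1)] : (0:ℝ) < 2 * K (j + 1))]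
        linarith [hK (j + 1)]
      calc (r * Real.exp (-((K (j + 1)) ^ 2 * r ^ 2))) ^ (j + 1)
          ≤ (1 / (2 * K (j + 1))) ^ (j + 1) := pow_le_pow_left₀ hpos hb1 (j + 1)
        _ ≤ (1 / (2 * K (j + 1))) ^ 1 :=
            pow_le_pow_of_le_one
              (div_nonneg zero_le_one (by linarith [hK (j + 1)])) h1K (by omega)
        _ = 1 / (2 * K (j + 1)) := pow_one _
    calc (∑ j ∈ Finset.range N,
          ‖d (j + 1)‖ * (r * Real.exp (-((K (j + 1)) ^ 2 * r ^ 2))) ^ (j + 1))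
          + ‖d 0‖
        ≤ (∑ j ∈ Finset.range N, ‖d (j + 1)‖ * (1 / (2 * K (j + 1))))
          + ‖d 0‖ := add_le_add_left (Finset.sum_le_sum hjs) _
      _ ≤ 1 := by linarith [hbound]
  refine ⟨f, ⟨hfd.differentiableOn, hb⟩, ?_⟩
  intro j hj κ hκ
  have hct : Continuous (iteratedDeriv j f) :=
    ContDiff.continuous_iteratedDeriv j (hfd.contDiff (n := ⊤)) le_top
  have htend : Tendsto (fun z => iteratedDeriv j f z / (j.factorial : ℂ))
      (nhds t0) (nhds (iteratedDeriv j f t0 / (j.factorial : ℂ))) :=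
    (hct.tendsto t0).div_const _
  have hval : iteratedDeriv j f t0 / (j.factorial : ℂ) = s j := by
    rw [hTay j hj, mul_div_cancel_left₀]
    exact_mod_cast Nat.factorial_ne_zero j
  rw [← hval]
  exact htend.mono_left nhdsWithin_le_nhds

/-- `K`-data used in the recursive construction. -/
noncomputable def BPK (N : ℕ) (δ : ℝ) (c : ℂ) : ℝ :=
  1 + ((N : ℝ) + 1) * ‖c‖ / δ

/-- `μ`-data used in the recursive construction. -/
noncomputable def BPmu (t0 : ℂ) (N : ℕ) (δ : ℝ) (j : ℕ) (c : ℂ) : ℂ :=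
  ((2 * (j : ℝ) * (BPK N δ c) ^ 2 : ℝ) : ℂ) * conj t0

/-- Recursively defined coefficients of the interpolant. -/
noncomputable def BPd (t0 : ℂ) (s : ℕ → ℂ) (N : ℕ) (δ : ℝ) : ℕ → ℂ
  | k => s k - ∑ j : Fin k,
      BPd t0 s N δ j * (BPmu t0 N δ j (BPd t0 s N δ j)) ^ (k - (j : ℕ))
        / (((k - (j : ℕ)).factorial : ℂ))
  decreasing_by exact j.isLt

lemma BPd_eq (t0 : ℂ) (s : ℕ → ℂ) (N : ℕ) (δ : ℝ) (k : ℕ) :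
    BPd t0 s N δ k = s k - ∑ j ∈ Finset.range k,
      BPd t0 s N δ j * (BPmu t0 N δ j (BPd t0 s N δ j)) ^ (k - j)
        / (((k - j).factorial : ℂ)) := by
  rw [BPd]
  congr 1
  exact Fin.sum_univ_eq_sum_range
    (fun j => BPd t0 s N δ j * (BPmu t0 N δ j (BPd t0 s N δ j)) ^ (k - j)
      / (((k - j).factorial : ℂ))) k

/-- If `BP_N` has a solution then `|s_0| ≤ 1`; if `|s_0| < 1` then `BP_N` has a solution. -/
theorem bp_solvable_necessary_sufficient (t0 : ℂ) (ht : ‖t0‖ = 1) (N : ℕ)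
    (s : ℕ → ℂ) :
    ((∃ f, SolvesBP t0 s N f) → ‖s 0‖ ≤ 1) ∧
      (‖s 0‖ < 1 → ∃ f, SolvesBP t0 s N f) := by
  constructor
  · -- Necessity
    rintro ⟨f, hf, hbd⟩
    have h0 := hbd 0 (Nat.zero_le N) 2 one_lt_two
    have hmem : t0 ∈ closure (stolzAngle t0 2) := by
      rw [Metric.mem_closure_iff]
      intro ε hε
      set m : ℝ := min ε 1 / 2 with hm
      have hm0 : 0 < m := by positivity
      have hm1 : m ≤ 1 / 2 := by
        rw [hm]; gcongr; exact min_le_right _ _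
      have hmε : m < ε := by
        have : m ≤ ε / 2 := by rw [hm]; gcongr; exact min_le_left _ _
        linarith
      refine ⟨((1 - m : ℝ) : ℂ) * t0, ⟨?_, ?_⟩, ?_⟩
      · -- in the unit disk
        have : ‖((1 - m : ℝ) : ℂ) * t0‖ = 1 - m := by
          rw [norm_mul, ht, Complex.norm_real, Real.norm_eq_abs, mul_one, _root_.abs_of_nonneg (by linarith)]
        simp only [unitDisk, Metric.mem_ball, Complex.dist_eq, sub_zero]
        rw [this]; linarith
      · -- Stolz condition
        have h1 : ‖((1 - m : ℝ) : ℂ) * t0 - t0‖ = m := by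
          have : ((1 - m : ℝ) : ℂ) * t0 - t0 = ((-m : ℝ) : ℂ) * t0 := by
            push_cast; ring
          rw [this, norm_mul, ht, Complex.norm_real, Real.norm_eq_abs, mul_one,
            _root_.abs_of_nonpos (by linarith)]
          ring
        have h2 : ‖((1 - m : ℝ) : ℂ) * t0‖ = 1 - m := by
          rw [norm_mul, ht, Complex.norm_real, Real.norm_eq_abs, mul_one, _root_.abs_of_nonneg (by linarith)]
        rw [h1, h2]
        linarith
      · have : t0 - ((1 - m : ℝ) : ℂ) * t0 = ((m : ℝ) : ℂ) * t0 := by push_cast; ring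
        rw [Complex.dist_eq, this, norm_mul, ht, Complex.norm_real, Real.norm_eq_abs, mul_one,
          _root_.abs_of_nonneg hm0.le]
        exact hmε
    haveI : (nhdsWithin t0 (stolzAngle t0 2)).NeBot :=
      mem_closure_iff_nhdsWithin_neBot.mp hmem
    have habs : Tendsto (fun z => ‖iteratedDeriv 0 f z / (Nat.factorial 0 : ℂ)‖)
        (nhdsWithin t0 (stolzAngle t0 2)) (nhds (‖s 0‖)) :=
      (continuous_norm.tendsto _).comp h0
    refine le_of_tendsto habs ?_
    filter_upwards [self_mem_nhdsWithin] with z hz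
    have hzd : z ∈ unitDisk := hz.1
    simpa [iteratedDeriv_zero] using hf.2 z hzd
  · -- Sufficiency
    intro hs0
    set δ : ℝ := 1 - ‖s 0‖ with hδdef
    have hδ : 0 < δ := by rw [hδdef]; linarith
    have hKge : ∀ c : ℂ, 1 ≤ BPK N δ c := by
      intro c
      have : (0 : ℝ) ≤ ((N : ℝ) + 1) * ‖c‖ / δ := by positivity
      simp only [BPK]; linarith
    have hd0 : BPd t0 s N δ 0 = s 0 := by
      rw [BPd_eq]; simp
    refine bp_construct t0 ht N s (BPd t0 s N δ)
      (fun j => BPK N δ (BPd t0 s N δ j))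
      (fun j => BPmu t0 N δ j (BPd t0 s N δ j))
      (fun j => hKge _) (fun j => rfl) ?_ ?_
    · -- recursion
      intro k hk
      rw [Finset.sum_range_succ, Nat.sub_self]
      simp only [pow_zero, Nat.factorial_zero, Nat.cast_one, mul_one, div_one]
      rw [BPd_eq t0 s N δ k]
      ring
    · -- bound
      rw [hd0]
      have hterm : ∀ j ∈ Finset.range N,
          ‖BPd t0 s N δ (j + 1)‖
            * (1 / (2 * BPK N δ (BPd t0 s N δ (j + 1)))) ≤ δ / (2 * ((N : ℝ) + 1)) := by
        intro j _
        set c := ‖BPd t0 s N δ (j + 1)‖ with hc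
        have hc0 : 0 ≤ c := norm_nonneg _
        have hKpos : 0 < BPK N δ (BPd t0 s N δ (j + 1)) :=
          lt_of_lt_of_le one_pos (hKge _)
        rw [mul_one_div, div_le_div_iff₀ (by positivity) (by positivity)]
        have hKval : BPK N δ (BPd t0 s N δ (j + 1)) = 1 + ((N : ℝ) + 1) * c / δ := rfl
        rw [hKval]
        have hexp : δ * (2 * (1 + ((N : ℝ) + 1) * c / δ))
            = 2 * δ + 2 * (((N : ℝ) + 1) * c) := by
          field_simp
        rw [hexp]
        have hN0 : (0 : ℝ) ≤ (N : ℝ) := Nat.cast_nonneg N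
        nlinarith
      have hsum : ∑ j ∈ Finset.range N,
          ‖BPd t0 s N δ (j + 1)‖
            * (1 / (2 * BPK N δ (BPd t0 s N δ (j + 1))))
          ≤ (N : ℝ) * (δ / (2 * ((N : ℝ) + 1))) := by
        calc ∑ j ∈ Finset.range N,
            ‖BPd t0 s N δ (j + 1)‖
              * (1 / (2 * BPK N δ (BPd t0 s N δ (j + 1))))
            ≤ ∑ _j ∈ Finset.range N, δ / (2 * ((N : ℝ) + 1)) :=
              Finset.sum_le_sum hterm
          _ = (N : ℝ) * (δ / (2 * ((N : ℝ) + 1))) := by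
              rw [Finset.sum_const, Finset.card_range, nsmul_eq_mul]
      have hhalf : (N : ℝ) * (δ / (2 * ((N : ℝ) + 1))) ≤ δ / 2 := by
        have hc0 : 0 ≤ δ / (2 * ((N : ℝ) + 1)) := by positivity
        have hcc : δ / (2 * ((N : ℝ) + 1)) * (2 * ((N : ℝ) + 1)) = δ :=
          div_mul_cancel₀ _ (by positivity)
        nlinarith [hc0, hcc, Nat.cast_nonneg (α := ℝ) N]
      have : ‖s 0‖ + δ / 2 ≤ 1 := by
        rw [hδdef]; linarith
      linarith
end
end

section
/- Let t_0 ∈ 𝕋 and s_0, s_1 ∈ ℂ. There exists a function f ∈ 𝒮 such that f(z) = s_0 + s_1(z − t_0) + o(|z − t_0|) as z →∠ t_0 if and only if either (1) |s_0| < 1, or (2) |s_0| = 1 and t_0·s_1·conj(s_0) is a nonnegative real number. Moreover, such a function is unique if and only if |s_0| = 1 and s_1 = 0, and in that case the unique such function is the constant function identically equal to s_0. -/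
open Complex Filter Matrix Metric Set Asymptotics
open scoped ComplexConjugate ComplexOrder Topology

noncomputable section
set_option maxHeartbeats 1600000

/-- `f ∈ 𝒮` solves the first-order boundary problem at `t0` with data `s0, s1`. -/
def Sol1 (t0 s0 s1 : ℂ) (f : ℂ → ℂ) : Prop :=
  f ∈ SchurClass ∧
    NTLittleO (fun z => f z - (s0 + s1 * (z - t0))) (fun z => z - t0) t0

namespace BP1
-- from aux1.lean


def mphi (a : ℂ) : ℂ → ℂ := fun u => (a - u) / (1 - conj a * u)

lemma normSq_identity (a u : ℂ) :
    Complex.normSq (1 - conj a * u) - Complex.normSq (a - u)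
      = (1 - Complex.normSq a) * (1 - Complex.normSq u) := by
  simp only [Complex.normSq_apply, Complex.sub_re, Complex.sub_im, Complex.mul_re, Complex.mul_im,
    Complex.one_re, Complex.one_im, Complex.conj_re, Complex.conj_im]
  ring

lemma normSq_lt_one {z : ℂ} (h : norm z < 1) : Complex.normSq z < 1 := by
  rw [← Complex.sq_norm]; nlinarith [norm_nonneg z]

lemma normSq_le_one {z : ℂ} (h : norm z ≤ 1) : Complex.normSq z ≤ 1 := by
  rw [← Complex.sq_norm]; nlinarith [norm_nonneg z]

lemma abs_le_one_of_normSq {z : ℂ} (h : Complex.normSq z ≤ 1) : norm z ≤ 1 := by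
  rw [← Complex.sq_norm] at h; nlinarith [norm_nonneg z]

lemma abs_lt_one_of_normSq {z : ℂ} (h : Complex.normSq z < 1) : norm z < 1 := by
  rw [← Complex.sq_norm] at h; nlinarith [norm_nonneg z]

lemma denom_ne {a u : ℂ} (ha : norm a < 1) (hu : norm u ≤ 1) :
    1 - conj a * u ≠ 0 := by
  intro h
  have h1 : conj a * u = 1 := by linear_combination -h
  have : norm (conj a * u) = 1 := by rw [h1, norm_one]
  rw [norm_mul, Complex.norm_conj] at this
  nlinarith [norm_nonneg a, norm_nonneg u]

lemma normSq_denom_pos {a u : ℂ} (ha : norm a < 1) (hu : norm u ≤ 1) :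
    0 < Complex.normSq (1 - conj a * u) :=
  Complex.normSq_pos.2 (denom_ne ha hu)

lemma one_sub_normSq_mphi {a u : ℂ} (ha : norm a < 1) (hu : norm u ≤ 1) :
    1 - Complex.normSq (mphi a u)
      = (1 - Complex.normSq a) * (1 - Complex.normSq u) / Complex.normSq (1 - conj a * u) := by
  have hd := normSq_denom_pos ha hu
  rw [show mphi a u = (a - u) / (1 - conj a * u) from rfl]
  rw [_root_.map_div₀, ← normSq_identity a u]
  rw [sub_div, div_self hd.ne']

lemma mphi_abs_le {a u : ℂ} (ha : norm a < 1) (hu : norm u ≤ 1) :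
    norm (mphi a u) ≤ 1 := by
  apply abs_le_one_of_normSq
  have h1 : 0 ≤ 1 - Complex.normSq (mphi a u) := by
    rw [one_sub_normSq_mphi ha hu]
    exact div_nonneg (mul_nonneg (by linarith [normSq_lt_one ha]) (by linarith [normSq_le_one hu]))
      (normSq_denom_pos ha hu).le
  linarith

lemma mphi_abs_lt {a u : ℂ} (ha : norm a < 1) (hu : norm u < 1) :
    norm (mphi a u) < 1 := by
  apply abs_lt_one_of_normSq
  have h1 : 0 < 1 - Complex.normSq (mphi a u) := by
    rw [one_sub_normSq_mphi ha hu.le]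
    exact div_pos (mul_pos (by linarith [normSq_lt_one ha]) (by linarith [normSq_lt_one hu]))
      (normSq_denom_pos ha hu.le)
  linarith

lemma mphi_self (a : ℂ) : mphi a a = 0 := by simp [mphi]

lemma mphi_zero (a : ℂ) : mphi a 0 = a := by simp [mphi]

lemma mphi_invol {a z : ℂ} (ha : norm a < 1) (hz : norm z ≤ 1) :
    mphi a (mphi a z) = z := by
  have h1 : 1 - conj a * z ≠ 0 := denom_ne ha hz
  have h2 : 1 - conj a * mphi a z ≠ 0 := denom_ne ha (mphi_abs_le ha hz)
  simp only [mphi] at h2 ⊢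
  rw [div_eq_iff h2]
  have h1' : 1 - z * conj a ≠ 0 := by rw [mul_comm]; exact h1
  field_simp
  ring

lemma mphi_diffAt {a u : ℂ} (h : 1 - conj a * u ≠ 0) : DifferentiableAt ℂ (mphi a) u := by
  apply DifferentiableAt.div
  · exact (differentiableAt_const a).sub differentiableAt_id
  · exact (differentiableAt_const 1).sub ((differentiableAt_const _).mul differentiableAt_id)
  · exact h

/-- Schwarz lemma with closed target ball. -/
lemma schwarz_closed {F : ℂ → ℂ} (hd : DifferentiableOn ℂ F (ball 0 1)) (h0 : F 0 = 0)
    (hb : ∀ w ∈ ball (0:ℂ) 1, norm (F w) ≤ 1) {w : ℂ} (hw : w ∈ ball (0:ℂ) 1) :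
    norm (F w) ≤ norm w := by
  have key : ∀ R : ℝ, 1 < R → norm (F w) ≤ R * norm w := by
    intro R hR
    have maps : MapsTo F (ball 0 1) (closedBall (F 0) R) := by
      intro z hz
      rw [h0, mem_closedBall, dist_eq, sub_zero]
      exact (lt_of_le_of_lt (hb z hz) hR).le
    have := Complex.dist_le_div_mul_dist_of_mapsTo_ball hd maps hw
    simpa [h0, Complex.dist_eq] using this
  have h2 : Tendsto (fun R : ℝ => R * norm w) (𝓝[>] 1) (𝓝 (1 * norm w)) :=
    (tendsto_id.mul_const _).mono_left nhdsWithin_le_nhds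
  have h3 : ∀ᶠ R in 𝓝[>] (1:ℝ), norm (F w) ≤ R * norm w := by
    filter_upwards [self_mem_nhdsWithin] with R hR using key R hR
  simpa using ge_of_tendsto h2 h3


-- from aux3.lean


def pth (t0 : ℂ) (α : ℝ) (δ : ℝ) : ℂ := t0 * (1 - (δ:ℂ) * (1 - (α:ℂ) * Complex.I))

lemma pth_sub (t0 : ℂ) (α δ : ℝ) : pth t0 α δ - t0 = -t0 * (δ:ℂ) * (1 - (α:ℂ)*Complex.I) := by
  simp [pth]; ring

lemma normSq_factor (α δ : ℝ) :
    Complex.normSq (1 - (δ:ℂ) * (1 - (α:ℂ) * Complex.I)) = (1-δ)^2 + (δ*α)^2 := by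
  simp [Complex.normSq_apply]
  ring

lemma abs_one_sub_mulI (α : ℝ) : norm (1 - (α:ℂ)*Complex.I) = Real.sqrt (1+α^2) := by
  rw [Complex.norm_def]
  congr 1
  simp [Complex.normSq_apply]
  ring

lemma abs_factor (α δ : ℝ) (hδ : 0 ≤ δ) :
    norm ((δ:ℂ) * (1 - (α:ℂ)*Complex.I)) = δ * Real.sqrt (1 + α^2) := by
  rw [norm_mul, Complex.norm_real, Real.norm_eq_abs, _root_.abs_of_nonneg hδ, abs_one_sub_mulI]

lemma pth_normSq (t0 : ℂ) (ht : norm t0 = 1) (α δ : ℝ) :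
    Complex.normSq (pth t0 α δ) = (1-δ)^2 + (δ*α)^2 := by
  rw [pth, _root_.map_mul, ← normSq_factor α δ]
  have : Complex.normSq t0 = 1 := by rw [← Complex.sq_norm, ht]; norm_num
  rw [this, one_mul]

lemma pth_mem_stolz (t0 : ℂ) (ht : norm t0 = 1) (α : ℝ) {δ : ℝ} (hδ : 0 < δ)
    (hδ1 : δ * (1 + α^2) ≤ 1) {κ : ℝ} (hκ : 2 * Real.sqrt (1 + α^2) + 1 ≤ κ) :
    pth t0 α δ ∈ stolzAngle t0 κ := by
  set A := norm (pth t0 α δ) with hA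
  have hA0 : 0 ≤ A := norm_nonneg _
  have hns : A^2 = (1-δ)^2 + (δ*α)^2 := by rw [hA, Complex.sq_norm, pth_normSq t0 ht]
  have hA2 : A^2 ≤ 1 - δ := by
    rw [hns]; nlinarith
  have hA1 : A < 1 := by nlinarith
  have habs : norm (pth t0 α δ - t0) = δ * Real.sqrt (1 + α^2) := by
    rw [pth_sub, show -t0 * (δ:ℂ) * (1 - (α:ℂ)*Complex.I) = -t0 * ((δ:ℂ) * (1 - (α:ℂ)*Complex.I)) by ring,
      norm_mul, norm_neg, ht, one_mul, abs_factor α δ hδ.le]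
  constructor
  · simpa [unitDisk, mem_ball, Complex.dist_eq] using hA1
  · rw [habs]
    have h1 : 1 - A ≥ δ / 2 := by nlinarith
    have hs : (1:ℝ) ≤ Real.sqrt (1 + α^2) := by
      have h := Real.sqrt_le_sqrt (show (1:ℝ) ≤ 1+α^2 by nlinarith)
      rwa [Real.sqrt_one] at h
    calc δ * Real.sqrt (1+α^2) < δ * Real.sqrt (1+α^2) + δ/2 := by linarith
    _ = (2*Real.sqrt (1+α^2) + 1) * (δ/2) := by ring
    _ ≤ κ * (δ/2) := by apply mul_le_mul_of_nonneg_right hκ; linarith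
    _ ≤ κ * (1 - A) := by
        apply mul_le_mul_of_nonneg_left h1
        linarith [hs]

lemma pth_tendsto (t0 : ℂ) (ht : norm t0 = 1) (α : ℝ) {κ : ℝ}
    (hκ : 2 * Real.sqrt (1 + α^2) + 1 ≤ κ) :
    Tendsto (pth t0 α) (𝓝[>] (0:ℝ)) (𝓝[stolzAngle t0 κ] t0) := by
  apply tendsto_nhdsWithin_of_tendsto_nhds_of_eventually_within
  · have hc : Continuous (pth t0 α) := by
      unfold pth; fun_prop
    have h0 : pth t0 α 0 = t0 := by simp [pth]
    have := hc.tendsto 0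
    rw [h0] at this
    exact this.mono_left nhdsWithin_le_nhds
  · have hmem : Ioo (0:ℝ) (1/(1+α^2)) ∈ 𝓝[>] (0:ℝ) := by
      apply Ioo_mem_nhdsGT_of_mem
      constructor
      · exact le_refl _
      · positivity
    filter_upwards [hmem] with δ hδ
    apply pth_mem_stolz t0 ht α hδ.1 _ hκ
    rw [div_eq_mul_inv] at hδ
    have h2 : (0:ℝ) < 1 + α^2 := by positivity
    calc δ * (1+α^2) ≤ (1/(1+α^2)) * (1+α^2) := by
          apply mul_le_mul_of_nonneg_right hδ.2.le h2.le
    _ = 1 := by field_simp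

lemma one_lt_kappa (α : ℝ) : 1 < 2 * Real.sqrt (1 + α^2) + 1 := by
  have h := Real.sqrt_le_sqrt (show (1:ℝ) ≤ 1+α^2 by nlinarith)
  rw [Real.sqrt_one] at h
  linarith


-- from aux4.lean

lemma mem_unitDisk {z : ℂ} : z ∈ unitDisk ↔ norm z < 1 := by
  simp [unitDisk, mem_ball, Complex.dist_eq]

/-- littleO along the path -/
lemma sol_littleO {f : ℂ → ℂ} {t0 s0 s1 : ℂ} (ht : norm t0 = 1)
    (hlo : NTLittleO (fun z => f z - (s0 + s1 * (z - t0))) (fun z => z - t0) t0) (α : ℝ) :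
    (fun δ : ℝ => f (pth t0 α δ) - (s0 + s1 * (pth t0 α δ - t0)))
      =o[𝓝[>] (0:ℝ)] (fun δ : ℝ => (δ:ℂ)) := by
  have h1 := (hlo _ (one_lt_kappa α)).comp_tendsto (pth_tendsto t0 ht α (le_refl _))
  have h2 : (fun δ : ℝ => pth t0 α δ - t0) =O[𝓝[>] (0:ℝ)] (fun δ : ℝ => (δ:ℂ)) := by
    rw [isBigO_iff]
    refine ⟨Real.sqrt (1 + α^2), ?_⟩
    filter_upwards [self_mem_nhdsWithin] with δ (hδ : 0 < δ)
    rw [pth_sub]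
    have : norm (-t0 * (δ:ℂ) * (1 - (α:ℂ)*Complex.I))
        = δ * Real.sqrt (1+α^2) := by
      rw [show -t0 * (δ:ℂ) * (1 - (α:ℂ)*Complex.I) = -t0 * ((δ:ℂ) * (1 - (α:ℂ)*Complex.I)) by ring,
        norm_mul, norm_neg, ht, one_mul, abs_factor α δ hδ.le]
    simp only [this, Complex.norm_real, Real.norm_eq_abs]
    rw [_root_.abs_of_nonneg hδ.le]
    ring_nf
    exact le_refl _
  exact h1.trans_isBigO h2

lemma pth_eventually_mem {t0 : ℂ} (ht : norm t0 = 1) (α : ℝ) :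
    ∀ᶠ δ in 𝓝[>] (0:ℝ), pth t0 α δ ∈ unitDisk := by
  have h := pth_tendsto t0 ht α (le_refl (2 * Real.sqrt (1 + α^2) + 1))
  have h2 := tendsto_nhdsWithin_iff.mp h
  filter_upwards [h2.2] with δ hδ
  exact hδ.1

lemma tendsto_f_pth {f : ℂ → ℂ} {t0 s0 s1 : ℂ} (ht : norm t0 = 1)
    (hlo : NTLittleO (fun z => f z - (s0 + s1 * (z - t0))) (fun z => z - t0) t0) (α : ℝ) :
    Tendsto (fun δ => f (pth t0 α δ)) (𝓝[>] (0:ℝ)) (𝓝 s0) := by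
  have hE := sol_littleO ht hlo α
  have hδ0 : Tendsto (fun δ : ℝ => (δ:ℂ)) (𝓝[>] (0:ℝ)) (𝓝 0) := by
    have := Complex.continuous_ofReal.tendsto 0
    simpa using this.mono_left nhdsWithin_le_nhds
  have hEz : Tendsto (fun δ : ℝ => f (pth t0 α δ) - (s0 + s1 * (pth t0 α δ - t0)))
      (𝓝[>] (0:ℝ)) (𝓝 0) := hE.tendsto_zero_of_tendsto hδ0
  have hsub : Tendsto (fun δ : ℝ => pth t0 α δ - t0) (𝓝[>] (0:ℝ)) (𝓝 0) := by
    have hc : Continuous (fun δ : ℝ => pth t0 α δ - t0) := by unfold pth; fun_prop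
    exact (hc.tendsto' 0 0 (by simp [pth])).mono_left nhdsWithin_le_nhds
  have := hEz.add ((tendsto_const_nhds (x := s0 + s1 * 0)).add
    ((tendsto_const_nhds (x := s1)).mul hsub))
  simp only [mul_zero, add_zero, zero_add] at this
  convert this using 2 with δ
  ring

lemma abs_s0_le_one {f : ℂ → ℂ} {t0 s0 s1 : ℂ} (ht : norm t0 = 1)
    (hsol : Sol1 t0 s0 s1 f) : norm s0 ≤ 1 := by
  obtain ⟨⟨hdf, hbf⟩, hlo⟩ := hsol
  have h1 := (continuous_norm.tendsto s0).comp (tendsto_f_pth ht hlo 0)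
  apply le_of_tendsto h1
  filter_upwards [pth_eventually_mem ht 0] with δ hδ
  exact hbf _ hδ

/-- key boundary inequality -/
lemma re_ineq {f : ℂ → ℂ} {t0 s0 s1 : ℂ} (ht : norm t0 = 1)
    (hsol : Sol1 t0 s0 s1 f) (hs0 : norm s0 = 1) (α : ℝ) :
    0 ≤ ((1 - (α:ℂ)*Complex.I) * (t0 * s1 * conj s0)).re := by
  obtain ⟨⟨hdf, hbf⟩, hlo⟩ := hsol
  set w := t0 * s1 * conj s0 with hw
  set E := fun δ : ℝ => f (pth t0 α δ) - (s0 + s1 * (pth t0 α δ - t0)) with hE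
  set R := ((1 - (α:ℂ)*Complex.I) * w).re with hR
  refine le_of_forall_pos_le_add ?_
  intro ε hε
  have hEb := (sol_littleO ht hlo α).def hε
  have hev := (hEb.and (pth_eventually_mem ht α)).and
    (Ioo_mem_nhdsGT_of_mem (show (0:ℝ) ∈ Ico (0:ℝ) 1 by constructor <;> norm_num))
  obtain ⟨δ, ⟨hEδ, hmem⟩, hδpos, hδ1⟩ := hev.exists
  set z := pth t0 α δ with hz
  set v := s1 * (z - t0) + E δ with hv
  have hfz : f z = s0 + v := by
    simp only [hv, hE]
    ring
  have hb : Complex.normSq (f z) ≤ 1 := by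
    have := hbf z hmem
    rw [← Complex.sq_norm]
    nlinarith [norm_nonneg (f z)]
  have hns0 : Complex.normSq s0 = 1 := by rw [← Complex.sq_norm, hs0]; norm_num
  have hXle : (s0 * conj v).re ≤ 0 := by
    rw [hfz, Complex.normSq_add, hns0] at hb
    nlinarith [Complex.normSq_nonneg v]
  have hre_eq : (s0 * conj v).re = (conj s0 * v).re := by
    have : conj (s0 * conj v) = conj s0 * v := by
      rw [_root_.map_mul, Complex.conj_conj]
    rw [← Complex.conj_re (s0 * conj v), this]
  have hsplit : (conj s0 * v).re = -(δ * R) + (conj s0 * E δ).re := by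
    have hzt : z - t0 = -t0 * (δ:ℂ) * (1 - (α:ℂ)*Complex.I) := pth_sub t0 α δ
    have : conj s0 * v = ((-δ : ℝ) : ℂ) * ((1 - (α:ℂ)*Complex.I) * w) + conj s0 * E δ := by
      rw [hv, hzt, hw]
      push_cast
      ring
    rw [this, Complex.add_re, Complex.re_ofReal_mul, hR]
    ring
  have habsE : norm (conj s0 * E δ) ≤ ε * δ := by
    rw [norm_mul, Complex.norm_conj, hs0, one_mul]
    have := hEδ
    simp only [Complex.norm_real, Real.norm_eq_abs] at this
    rwa [_root_.abs_of_nonneg hδpos.le] at this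
  have hre_ge : -(ε * δ) ≤ (conj s0 * E δ).re := by
    have h1 := Complex.abs_re_le_norm (conj s0 * E δ)
    rw [abs_le] at h1
    linarith [h1.1]
  have : δ * R ≥ -(ε * δ) := by
    rw [hre_eq, hsplit] at hXle
    linarith
  have hRge : R ≥ -ε := by
    by_contra hc
    push_neg at hc
    nlinarith
  linarith

-- from aux2.lean

/-- Schwarz–Pick. -/
lemma schwarz_pick {f : ℂ → ℂ} (hf : f ∈ SchurClass) {z0 z : ℂ}
    (hz0 : z0 ∈ unitDisk) (hz : z ∈ unitDisk) (ha : norm (f z0) < 1) :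
    norm (mphi (f z0) (f z)) ≤ norm (mphi z0 z) := by
  obtain ⟨hdf, hbf⟩ := hf
  rw [mem_unitDisk] at hz0 hz
  set a := f z0 with ha_def
  set F : ℂ → ℂ := fun w => mphi a (f (mphi z0 w)) with hF
  have hball : (ball (0:ℂ) 1) = unitDisk := rfl
  have maps1 : MapsTo (mphi z0) (ball 0 1) unitDisk := by
    intro w hw
    rw [mem_unitDisk]
    exact mphi_abs_lt hz0 (by simpa [Complex.dist_eq] using hw)
  have d1 : DifferentiableOn ℂ (mphi z0) (ball 0 1) := by
    intro w hw
    have hw' : norm w ≤ 1 := by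
      have := mem_ball.mp hw
      rw [Complex.dist_eq, sub_zero] at this
      exact this.le
    exact (mphi_diffAt (denom_ne hz0 hw')).differentiableWithinAt
  have d12 : DifferentiableOn ℂ (f ∘ mphi z0) (ball 0 1) := hdf.comp d1 maps1
  have d3 : DifferentiableOn ℂ (mphi a) (closedBall 0 1) := fun u hu =>
    (mphi_diffAt (denom_ne ha (by simpa [Complex.dist_eq] using hu))).differentiableWithinAt
  have maps2 : MapsTo (f ∘ mphi z0) (ball 0 1) (closedBall 0 1) := by
    intro w hw
    have := hbf _ (maps1 hw)
    simpa [Complex.dist_eq] using this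
  have hdF : DifferentiableOn ℂ F (ball 0 1) := d3.comp d12 maps2
  have h0 : F 0 = 0 := by
    simp only [hF, mphi_zero, ha_def, mphi_self]
  have hbF : ∀ w ∈ ball (0:ℂ) 1, norm (F w) ≤ 1 := by
    intro w hw
    exact mphi_abs_le ha (hbf _ (maps1 hw))
  have hwmem : mphi z0 z ∈ ball (0:ℂ) 1 := by
    simpa [Complex.dist_eq] using mphi_abs_lt hz0 hz
  have := schwarz_closed hdF h0 hbF hwmem
  simp only [hF] at this
  rwa [mphi_invol hz0 hz.le] at this

-- from aux5.lean

/-- If `|s0| = 1` and the angular derivative is `0`, every solution is constant `s0`. -/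
theorem const_of {f : ℂ → ℂ} {t0 s0 : ℂ} (ht : norm t0 = 1) (hs0 : norm s0 = 1)
    (hsol : Sol1 t0 s0 0 f) : Set.EqOn f (fun _ => s0) unitDisk := by
  obtain ⟨hf, hlo⟩ := hsol
  obtain ⟨hdf, hbf⟩ := hf
  have hE : (fun δ : ℝ => f (pth t0 0 δ) - s0) =o[𝓝[>] (0:ℝ)] (fun δ : ℝ => (δ:ℂ)) := by
    have := sol_littleO ht hlo 0
    simpa using this
  -- Step A : |f| ≡ 1 on the disk
  have stepA : ∀ z0 ∈ unitDisk, norm (f z0) = 1 := by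
    intro z0 hz0
    by_contra hne
    have hlt : norm (f z0) < 1 := lt_of_le_of_ne (hbf z0 hz0) hne
    set a := f z0 with ha_def
    have hz0' : norm z0 < 1 := mem_unitDisk.mp hz0
    have hposz0 : 0 < 1 - Complex.normSq z0 := by
      have : Complex.normSq z0 < 1 := by rw [← Complex.sq_norm]; nlinarith [norm_nonneg z0]
      linarith
    have hposa : 0 < 1 - norm a := by linarith
    set C := (1 - Complex.normSq z0) * (1 - norm a)^2 / 8 with hC
    have hCpos : 0 < C := by positivity
    have hkey : C ≤ 0 := by
      refine le_of_forall_pos_le_add ?_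
      intro ε hε
      have hev := ((hE.def hε).and (pth_eventually_mem ht 0)).and
        (Ioo_mem_nhdsGT_of_mem (show (0:ℝ) ∈ Ico (0:ℝ) 1 by constructor <;> norm_num))
      obtain ⟨δ, ⟨hEδ, hmem⟩, hδpos, hδ1⟩ := hev.exists
      set z := pth t0 0 δ with hzdef
      set D := norm (f z - s0) with hD
      have hDle : D ≤ ε * δ := by
        have := hEδ
        simp only [Complex.norm_real, Real.norm_eq_abs] at this
        rwa [_root_.abs_of_nonneg hδpos.le] at this
      have hzlt : norm z < 1 := mem_unitDisk.mp hmem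
      have hfz_le : norm (f z) ≤ 1 := hbf z hmem
      -- Schwarz-Pick
      have hsp := schwarz_pick ⟨hdf, hbf⟩ hz0 hmem hlt
      have hsp2 : Complex.normSq (mphi a (f z)) ≤ Complex.normSq (mphi z0 z) := by
        rw [← Complex.sq_norm, ← Complex.sq_norm]
        nlinarith [norm_nonneg (mphi a (f z)), norm_nonneg (mphi z0 z)]
      have h1 : 1 - Complex.normSq (mphi z0 z) ≤ 1 - Complex.normSq (mphi a (f z)) := by linarith
      rw [one_sub_normSq_mphi hz0' hzlt.le, one_sub_normSq_mphi hlt hfz_le] at h1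
      -- bounds
      have hnsz : Complex.normSq z = (1-δ)^2 := by
        rw [hzdef, pth_normSq t0 ht 0 δ]; ring
      have hnum1 : δ ≤ 1 - Complex.normSq z := by rw [hnsz]; nlinarith
      have hden1_pos : 0 < Complex.normSq (1 - conj z0 * z) := normSq_denom_pos hz0' hzlt.le
      have hden1_le : Complex.normSq (1 - conj z0 * z) ≤ 4 := by
        have habs : norm (1 - conj z0 * z) ≤ 2 := by
          calc norm (1 - conj z0 * z) ≤ norm 1 + norm (conj z0 * z) :=
                norm_sub_le 1 (conj z0 * z)
          _ ≤ 1 + 1 := by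
              rw [norm_one, norm_mul, Complex.norm_conj]
              nlinarith [norm_nonneg z0, norm_nonneg z]
          _ = 2 := by norm_num
        rw [← Complex.sq_norm]
        nlinarith [norm_nonneg (1 - conj z0 * z)]
      have hnsz0 : Complex.normSq z0 < 1 := by linarith
      have hnsalt : Complex.normSq a < 1 := by rw [← Complex.sq_norm]; nlinarith [norm_nonneg a]
      -- numerator bound on RHS
      have hfz_ge : 1 - D ≤ norm (f z) := by
        have h := norm_sub_norm_le s0 (f z)
        rw [hs0] at h
        have h2 : norm (s0 - f z) = D := by rw [hD, norm_sub_rev]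
        linarith
      have hnum2 : 1 - Complex.normSq (f z) ≤ 2 * D := by
        have h2 : Complex.normSq (f z) = norm (f z) ^ 2 := (Complex.sq_norm _).symm
        nlinarith [norm_nonneg (f z)]
      have hden2_pos : 0 < Complex.normSq (1 - conj a * f z) := normSq_denom_pos hlt hfz_le
      have hden2_ge : (1 - norm a)^2 ≤ Complex.normSq (1 - conj a * f z) := by
        have habs : 1 - norm a ≤ norm (1 - conj a * f z) := by
          have h := norm_sub_norm_le (1:ℂ) (conj a * f z)
          simp only [norm_one, norm_mul, Complex.norm_conj] at h
          nlinarith [norm_nonneg a, norm_nonneg (f z)]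
        rw [← Complex.sq_norm]
        nlinarith [norm_nonneg (1 - conj a * f z)]
      -- combine
      have hLHS : (1 - Complex.normSq z0) * δ / 4
          ≤ (1 - Complex.normSq z0) * (1 - Complex.normSq z) / Complex.normSq (1 - conj z0 * z) := by
        rw [div_le_div_iff₀ (by norm_num) hden1_pos]
        have e1 : (1 - Complex.normSq z0) * δ * Complex.normSq (1 - conj z0 * z)
            ≤ (1 - Complex.normSq z0) * δ * 4 :=
          mul_le_mul_of_nonneg_left hden1_le (by positivity)
        have e2 : (1 - Complex.normSq z0) * δ * 4 ≤ (1 - Complex.normSq z0) * (1 - Complex.normSq z) * 4 :=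
          mul_le_mul_of_nonneg_right (mul_le_mul_of_nonneg_left hnum1 hposz0.le) (by norm_num)
        linarith
      have hRHS : (1 - Complex.normSq a) * (1 - Complex.normSq (f z)) / Complex.normSq (1 - conj a * f z)
          ≤ 2 * D / (1 - norm a)^2 := by
        rw [div_le_div_iff₀ hden2_pos (by positivity)]
        have hDnn : 0 ≤ D := norm_nonneg _
        have hnn : 0 ≤ 1 - Complex.normSq (f z) := by
          have h2 : Complex.normSq (f z) = norm (f z) ^ 2 := (Complex.sq_norm _).symm
          have := pow_le_one₀ (norm_nonneg (f z)) hfz_le (n := 2)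
          linarith
        have e1 : 1 - Complex.normSq a ≤ 1 := by linarith [Complex.normSq_nonneg a]
        have e2 : (1 - Complex.normSq a) * (1 - Complex.normSq (f z)) ≤ 2 * D := by
          calc (1 - Complex.normSq a) * (1 - Complex.normSq (f z))
              ≤ 1 * (2 * D) := mul_le_mul e1 hnum2 hnn (by norm_num)
          _ = 2 * D := one_mul _
        have e3 : (1 - Complex.normSq a) * (1 - Complex.normSq (f z)) * (1 - norm a)^2
            ≤ (2 * D) * Complex.normSq (1 - conj a * f z) := by
          apply mul_le_mul e2 hden2_ge (by positivity) (by positivity)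
        linarith
      have hchain : (1 - Complex.normSq z0) * δ / 4 ≤ 2 * (ε * δ) / (1 - norm a)^2 := by
        have h2D : 2 * D / (1 - norm a)^2 ≤ 2 * (ε * δ) / (1 - norm a)^2 := by
          apply div_le_div_of_nonneg_right (by linarith) (by positivity) |>.trans_eq rfl
        linarith
      rw [hC]
      rw [div_le_div_iff₀ (by norm_num) (by positivity : (0:ℝ) < (1 - norm a)^2)] at hchain
      nlinarith
    linarith
  -- Step B : f is constant on the disk
  have h0mem : (0:ℂ) ∈ unitDisk := by rw [mem_unitDisk]; simp
  have hmax : IsMaxOn (norm ∘ f) unitDisk 0 := by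
    intro z hz
    simp only [Function.comp_apply]
    rw [stepA 0 h0mem]
    exact hbf z hz
  have heq : Set.EqOn f (Function.const ℂ (f 0)) unitDisk :=
    Complex.eqOn_of_isPreconnected_of_isMaxOn_norm (convex_ball 0 1).isPreconnected
      isOpen_ball hdf h0mem hmax
  -- Step C : f 0 = s0
  have hf0 : f 0 = s0 := by
    have h1 : Tendsto (fun δ => f (pth t0 0 δ)) (𝓝[>] (0:ℝ)) (𝓝 s0) := tendsto_f_pth ht hlo 0
    have h2 : Tendsto (fun δ => f (pth t0 0 δ)) (𝓝[>] (0:ℝ)) (𝓝 (f 0)) := by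
      apply Tendsto.congr' _ (tendsto_const_nhds (x := f 0))
      filter_upwards [pth_eventually_mem ht 0] with δ hδ
      exact (heq hδ).symm
    exact tendsto_nhds_unique h2 h1
  intro z hz
  rw [heq hz, Function.const_apply, hf0]

-- from aux6.lean


lemma conj_mul_self {t0 : ℂ} (ht : norm t0 = 1) : conj t0 * t0 = 1 := by
  rw [Complex.conj_mul', ht]; norm_num

lemma ntlittleo_of_hasDerivAt {f : ℂ → ℂ} {t0 s0 s1 : ℂ}
    (hd : HasDerivAt f s1 t0) (h0 : f t0 = s0) :
    NTLittleO (fun z => f z - (s0 + s1 * (z - t0))) (fun z => z - t0) t0 := by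
  intro κ hκ
  have h1 := hasDerivAt_iff_isLittleO.mp hd
  have h2 : (fun z => f z - (s0 + s1 * (z - t0))) = (fun z => f z - f t0 - (z - t0) • s1) := by
    funext z
    rw [h0]
    simp [smul_eq_mul]
    ring
  rw [h2]
  exact h1.mono nhdsWithin_le_nhds

/-- constant solution -/
lemma sol_const {t0 s0 : ℂ} (hs0 : norm s0 ≤ 1) : Sol1 t0 s0 0 (fun _ => s0) := by
  refine ⟨⟨differentiableOn_const _, fun z _ => hs0⟩, ?_⟩
  have := ntlittleo_of_hasDerivAt (f := fun _ => s0) (t0 := t0) (s0 := s0) (s1 := 0)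
    (hasDerivAt_const t0 s0) rfl
  exact this

/-- `∃ m`, `(1-u) u^m` small on `[0,1]` -/
lemma exists_m {η : ℝ} (hη : 0 < η) : ∃ m : ℕ, ∀ u ∈ Icc (0:ℝ) 1, (1-u)*u^m ≤ η := by
  set ε := min η (1/2) with hε
  have hε0 : 0 < ε := lt_min hη (by norm_num)
  have hε2 : ε ≤ 1/2 := min_le_right _ _
  have hεη : ε ≤ η := min_le_left _ _
  have h1 : (0:ℝ) ≤ 1 - ε := by linarith
  have h2 : (1 - ε) < 1 := by linarith
  have h3 := tendsto_pow_atTop_nhds_zero_of_lt_one h1 h2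
  have h4 : ∀ᶠ m : ℕ in atTop, (1-ε)^m ≤ ε := h3.eventually (eventually_le_nhds hε0)
  obtain ⟨m, hm⟩ := h4.exists
  refine ⟨m, fun u hu => ?_⟩
  obtain ⟨hu0, hu1⟩ := hu
  by_cases hcase : u ≤ 1 - ε
  · have : u^m ≤ (1-ε)^m := pow_le_pow_left₀ hu0 hcase m
    have h5 : (1-u) * u^m ≤ 1 * u^m := by
      apply mul_le_mul_of_nonneg_right (by linarith) (pow_nonneg hu0 m)
    calc (1-u)*u^m ≤ 1 * u^m := h5
    _ = u^m := one_mul _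
    _ ≤ (1-ε)^m := this
    _ ≤ ε := hm
    _ ≤ η := hεη
  · push_neg at hcase
    have h5 : u^m ≤ 1 := pow_le_one₀ hu0 hu1
    calc (1-u)*u^m ≤ (1-u)*1 := mul_le_mul_of_nonneg_left h5 (by linarith)
    _ = 1-u := mul_one _
    _ ≤ ε := by linarith
    _ ≤ η := hεη

/-- key damping bound -/
lemma key_bound {t0 : ℂ} (ht : norm t0 = 1) (m : ℕ) {z : ℂ} (hz : norm z ≤ 1)
    {η : ℝ} (hη : 0 ≤ η) (hb : ∀ u ∈ Icc (0:ℝ) 1, (1-u)*u^m ≤ η) :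
    norm ((z - t0) * ((1 + conj t0 * z)/2)^m) ≤ 2 * Real.sqrt η := by
  set w := conj t0 * z with hw
  have hwabs : norm w ≤ 1 := by
    rw [hw, norm_mul, Complex.norm_conj, ht, one_mul]; exact hz
  have hzt : z - t0 = t0 * (w - 1) := by
    rw [hw, mul_sub, ← mul_assoc, mul_comm t0 (conj t0), conj_mul_self ht, one_mul, mul_one]
  have hwre : |w.re| ≤ 1 := le_trans (Complex.abs_re_le_norm w) hwabs
  set u := (1 + w.re)/2 with hu
  have hu0 : 0 ≤ u := by rw [hu]; cases' abs_le.mp hwre with h _; linarith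
  have hu1 : u ≤ 1 := by rw [hu]; cases' abs_le.mp hwre with _ h; linarith
  have hnsw : Complex.normSq w ≤ 1 := by
    rw [← Complex.sq_norm]; nlinarith [norm_nonneg w]
  set A := norm (w - 1) with hA
  set B := norm ((1 + w)/2) with hB
  have hA2 : A^2 ≤ 4*(1-u) := by
    rw [hA, Complex.sq_norm, Complex.normSq_sub]
    simp only [Complex.normSq_one, Complex.mul_re, Complex.one_re, Complex.one_im,
      Complex.conj_re, Complex.conj_im]
    rw [hu]
    simp only [Complex.normSq_apply] at hnsw ⊢
    ring_nf
    try nlinarith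
  have hB2 : B^2 ≤ u := by
    rw [hB, Complex.sq_norm, _root_.map_div₀, Complex.normSq_add]
    simp only [Complex.normSq_one, Complex.mul_re, Complex.one_re, Complex.one_im,
      Complex.conj_re, Complex.conj_im, Complex.normSq_ofNat]
    rw [hu]
    simp only [Complex.normSq_apply] at hnsw ⊢
    ring_nf
    try nlinarith
  have hA0 : 0 ≤ A := norm_nonneg _
  have hB0 : 0 ≤ B := norm_nonneg _
  have habs : norm ((z - t0) * ((1 + conj t0 * z)/2)^m) = A * B^m := by
    rw [hzt, norm_mul, norm_mul, ht, one_mul, norm_pow, hA, hB]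
  rw [habs]
  have hsq : (A * B^m)^2 ≤ 4*η := by
    have e1 : (A*B^m)^2 = A^2 * (B^2)^m := by ring
    have e2 : (B^2)^m ≤ u^m := pow_le_pow_left₀ (sq_nonneg B) hB2 m
    have e3 : A^2 * (B^2)^m ≤ (4*(1-u)) * u^m := by
      apply mul_le_mul hA2 e2 (pow_nonneg (sq_nonneg B) m) (by nlinarith)
    have e4 := hb u ⟨hu0, hu1⟩
    calc (A*B^m)^2 = A^2 * (B^2)^m := e1
    _ ≤ (4*(1-u)) * u^m := e3
    _ = 4*((1-u)*u^m) := by ring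
    _ ≤ 4*η := by linarith
  have h2s : 0 ≤ 2 * Real.sqrt η := by positivity
  nlinarith [Real.sq_sqrt hη, Real.sqrt_nonneg η, sq_nonneg (A*B^m - 2*Real.sqrt η), sq_nonneg (A*B^m + 2*Real.sqrt η), mul_nonneg hA0 (pow_nonneg hB0 m)]


-- from aux7.lean

def cand (t0 s0 s1 e : ℂ) (m : ℕ) : ℂ → ℂ :=
  fun z => s0 + s1 * ((z - t0) * ((1 + conj t0 * z)/2)^m) + e * (z - t0)^2

lemma cand_t0 {t0 s0 s1 e : ℂ} (m : ℕ) : cand t0 s0 s1 e m t0 = s0 := by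
  simp [cand]

lemma cand_hasDerivAt {t0 s0 s1 e : ℂ} (ht : norm t0 = 1) (m : ℕ) :
    HasDerivAt (cand t0 s0 s1 e m) s1 t0 := by
  have h1 : HasDerivAt (fun z : ℂ => z - t0) 1 t0 := (hasDerivAt_id t0).sub_const t0
  have hh : HasDerivAt (fun z : ℂ => ((1 + conj t0 * z)/2)^m)
      ((m : ℂ) * ((1 + conj t0 * t0)/2)^(m-1) * (conj t0 / 2)) t0 := by
    have hin : HasDerivAt (fun z : ℂ => (1 + conj t0 * z)/2) (conj t0 / 2) t0 := by
      have := ((hasDerivAt_id t0).const_mul (conj t0)).const_add 1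
      simpa using this.div_const 2
    simpa using (hin.fun_pow m)
  have hprod := h1.mul hh
  have hsq : HasDerivAt (fun z : ℂ => e * (z - t0)^2) (e * (2 * (t0 - t0) * 1)) t0 := by
    have := (h1.pow 2).const_mul e
    simpa using this
  have hsum : HasDerivAt (cand t0 s0 s1 e m) (s1 * (1 * ((1 + conj t0 * t0) / 2) ^ m +
      (t0 - t0) * ((m:ℂ) * ((1 + conj t0 * t0) / 2) ^ (m - 1) * (conj t0 / 2))) +
      e * (2 * (t0 - t0) * 1)) t0 := ((hprod.const_mul s1).const_add s0).add hsq
  convert hsum using 1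
  rw [conj_mul_self ht]
  norm_num

lemma cand_differentiable (t0 s0 s1 e : ℂ) (m : ℕ) : Differentiable ℂ (cand t0 s0 s1 e m) := by
  unfold cand
  fun_prop

lemma cand_bound {t0 s0 s1 e : ℂ} (ht : norm t0 = 1) (m : ℕ) {η : ℝ} (hη : 0 ≤ η)
    (hb : ∀ u ∈ Icc (0:ℝ) 1, (1-u)*u^m ≤ η) {z : ℂ} (hz : norm z ≤ 1) :
    norm (cand t0 s0 s1 e m z)
      ≤ norm s0 + norm s1 * (2 * Real.sqrt η) + norm e * 4 := by
  have h1 := key_bound ht m hz hη hb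
  have h2 : norm ((z - t0)^2) ≤ 4 := by
    have h3 : norm (z - t0) ≤ 2 := by
      calc norm (z - t0) ≤ norm z + norm t0 := norm_sub_le z t0
      _ ≤ 2 := by rw [ht]; linarith
    rw [norm_pow]
    calc norm (z - t0)^2 ≤ 2^2 := pow_le_pow_left₀ (norm_nonneg _) h3 2
    _ = 4 := by norm_num
  calc norm (cand t0 s0 s1 e m z)
      ≤ norm (s0 + s1 * ((z - t0) * ((1 + conj t0 * z)/2)^m)) + norm (e * (z - t0)^2) :=
        norm_add_le _ _
  _ ≤ (norm s0 + norm (s1 * ((z - t0) * ((1 + conj t0 * z)/2)^m))) + norm (e * (z - t0)^2) := by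
        gcongr
        exact norm_add_le _ _
  _ ≤ norm s0 + norm s1 * (2 * Real.sqrt η) + norm e * 4 := by
        have e1 : norm (s1 * ((z - t0) * ((1 + conj t0 * z)/2)^m))
            ≤ norm s1 * (2 * Real.sqrt η) := by
          rw [norm_mul]
          exact mul_le_mul_of_nonneg_left h1 (norm_nonneg s1)
        have e2 : norm (e * (z - t0)^2) ≤ norm e * 4 := by
          rw [norm_mul]
          exact mul_le_mul_of_nonneg_left h2 (norm_nonneg e)
        linarith

/-- two distinct solutions in the case `|s0| < 1` -/
lemma two_sols_lt {t0 s0 s1 : ℂ} (ht : norm t0 = 1) (hs0 : norm s0 < 1) :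
    ∃ f g, Sol1 t0 s0 s1 f ∧ Sol1 t0 s0 s1 g ∧ f 0 ≠ g 0 := by
  set η : ℝ := ((1 - norm s0)/(4*(norm s1 + 1)))^2 with hηdef
  have habs1 : 0 ≤ norm s1 := norm_nonneg s1
  have hpos : 0 < 1 - norm s0 := by linarith
  have hη : 0 < η := by rw [hηdef]; positivity
  obtain ⟨m, hm⟩ := exists_m hη
  have hsqrt : Real.sqrt η = (1 - norm s0)/(4*(norm s1 + 1)) := by
    rw [hηdef]
    exact Real.sqrt_sq (div_nonneg hpos.le (by positivity))
  have hterm : norm s1 * (2 * Real.sqrt η) ≤ (1 - norm s0)/2 := by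
    rw [hsqrt, show norm s1 * (2*((1 - norm s0)/(4*(norm s1+1))))
      = (norm s1 * (1 - norm s0) * 2)/(4*(norm s1+1)) from by ring,
      div_le_div_iff₀ (by positivity) (by norm_num)]
    nlinarith
  set e : ℂ := (((1 - norm s0)/8 : ℝ) : ℂ) with hedef
  have habse : norm e = (1 - norm s0)/8 := by
    rw [hedef, Complex.norm_real, Real.norm_eq_abs, _root_.abs_of_nonneg (by linarith)]
  have hsol : ∀ e' : ℂ, norm e' * 4 ≤ (1 - norm s0)/2 →
      Sol1 t0 s0 s1 (cand t0 s0 s1 e' m) := by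
    intro e' he'
    refine ⟨⟨(cand_differentiable t0 s0 s1 e' m).differentiableOn, ?_⟩, ?_⟩
    · intro z hz
      have hbd := cand_bound (s0 := s0) (s1 := s1) (e := e') ht m hη.le hm (mem_unitDisk.mp hz).le
      linarith [hbd, hterm]
    · exact ntlittleo_of_hasDerivAt (cand_hasDerivAt ht m) (cand_t0 m)
  refine ⟨cand t0 s0 s1 0 m, cand t0 s0 s1 e m, hsol 0 (by simp; linarith), hsol e ?_, ?_⟩
  · rw [habse]; linarith
  · simp only [cand]
    intro h
    have h2 : e * ((0:ℂ) - t0)^2 = 0 := by linear_combination (-1 : ℂ) * h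
    have ht0 : t0 ≠ 0 := by
      intro h3
      rw [h3] at ht
      simp at ht
    have he0 : e ≠ 0 := by
      rw [hedef]
      simp only [ne_eq, Complex.ofReal_eq_zero]
      intro h4
      have : norm s0 = 1 := by linarith [(by linarith : (1 - norm s0)/8 = 0)]
      linarith
    apply he0
    have := mul_eq_zero.mp h2
    rcases this with h5 | h5
    · exact h5
    · exfalso; apply ht0; have := pow_eq_zero_iff (n := 2) (by norm_num) |>.mp h5; simpa using this

-- from aux8.lean

def bl (c : ℝ) : ℂ → ℂ := fun w => (w + c) / (1 + c * w)

lemma bl_identity (c : ℝ) (w : ℂ) :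
    Complex.normSq (1 + c*w) - Complex.normSq (w + c) = (1-c^2)*(1 - Complex.normSq w) := by
  simp only [Complex.normSq_apply, Complex.add_re, Complex.add_im, Complex.mul_re, Complex.mul_im,
    Complex.one_re, Complex.one_im, Complex.ofReal_re, Complex.ofReal_im]
  ring

lemma bl_denom_ne {c : ℝ} (hc : |c| < 1) {w : ℂ} (hw : norm w ≤ 1) :
    (1:ℂ) + c * w ≠ 0 := by
  intro h
  have h1 : (c:ℂ) * w = -1 := by linear_combination h
  have h2 : norm ((c:ℂ) * w) = 1 := by rw [h1]; simp
  rw [norm_mul, Complex.norm_real, Real.norm_eq_abs] at h2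
  nlinarith [norm_nonneg w, abs_nonneg c]

lemma bl_abs_le {c : ℝ} (hc : |c| < 1) {w : ℂ} (hw : norm w ≤ 1) :
    norm (bl c w) ≤ 1 := by
  apply abs_le_one_of_normSq
  rw [bl, show ((w + c) / (1 + c*w) : ℂ) = (w + c) / (1 + c*w) from rfl, _root_.map_div₀]
  have hd : 0 < Complex.normSq (1 + c*w) := Complex.normSq_pos.2 (bl_denom_ne hc hw)
  rw [div_le_one hd]
  have hid := bl_identity c w
  have hns : Complex.normSq w ≤ 1 := by
    rw [← Complex.sq_norm]; nlinarith [norm_nonneg w]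
  have hcc : c^2 ≤ 1 := by nlinarith [_root_.sq_abs c, abs_nonneg c]
  nlinarith [mul_nonneg (by linarith : (0:ℝ) ≤ 1 - c^2) (by linarith : (0:ℝ) ≤ 1 - Complex.normSq w)]

lemma bl_diffAt {c : ℝ} (hc : |c| < 1) {w : ℂ} (hw : norm w ≤ 1) :
    DifferentiableAt ℂ (bl c) w := by
  apply DifferentiableAt.div
  · exact differentiableAt_id.add_const _
  · exact ((differentiableAt_id).const_mul _).const_add 1
  · exact bl_denom_ne hc hw

lemma bl_hasDerivAt (c : ℝ) {w : ℂ} (h : (1:ℂ) + c*w ≠ 0) :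
    HasDerivAt (bl c) ((1 - (c:ℂ)^2)/(1 + c*w)^2) w := by
  have h1 : HasDerivAt (fun u : ℂ => u + (c:ℂ)) 1 w := (hasDerivAt_id w).add_const _
  have h2 : HasDerivAt (fun u : ℂ => 1 + (c:ℂ)*u) (c:ℂ) w := by
    simpa using ((hasDerivAt_id w).const_mul (c:ℂ)).const_add 1
  have h3 : HasDerivAt (bl c) ((1 * (1 + c * w) - (w + c) * c) / (1 + c * w) ^ 2) w :=
    h1.div h2 h
  convert h3 using 1
  ring

lemma bl_one {c : ℝ} (hc : |c| < 1) : bl c 1 = 1 := by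
  have h : (1:ℂ) + c * 1 ≠ 0 := bl_denom_ne hc (by norm_num)
  have h' : (1:ℂ) + c ≠ 0 := by simpa using h
  rw [bl]
  simp only [mul_one, one_mul]
  rw [div_eq_one_iff_eq h']

lemma bl_zero (c : ℝ) : bl c 0 = c := by simp [bl]

/-- one solution in case |s0| = 1 with parameter c, target derivative d -/
lemma sol_bl {t0 s0 s1 : ℂ} (ht : norm t0 = 1) (hs0 : norm s0 = 1)
    {c : ℝ} (hc : |c| < 1) (hder : s0 * ((1 - (c:ℂ)^2)/(1 + (c:ℂ))^2 * conj t0) = s1) :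
    Sol1 t0 s0 s1 (fun z => s0 * bl c (conj t0 * z)) := by
  have hct : norm (conj t0) = 1 := by rw [Complex.norm_conj, ht]
  constructor
  · constructor
    · intro z hz
      have habs : norm (conj t0 * z) ≤ 1 := by
        rw [norm_mul, hct, one_mul]; exact (mem_unitDisk.mp hz).le
      exact (((bl_diffAt hc habs).comp z ((differentiableAt_id).const_mul _)).const_mul s0).differentiableWithinAt
    · intro z hz
      have habs : norm (conj t0 * z) ≤ 1 := by
        rw [norm_mul, hct, one_mul]; exact (mem_unitDisk.mp hz).le
      rw [norm_mul, hs0, one_mul]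
      exact bl_abs_le hc habs
  · have hinner : HasDerivAt (fun z : ℂ => conj t0 * z) (conj t0) t0 := by
      simpa using (hasDerivAt_id t0).const_mul (conj t0)
    have hne : (1:ℂ) + c * (conj t0 * t0) ≠ 0 := by
      rw [conj_mul_self ht, mul_one]
      simpa using bl_denom_ne hc (show norm (1:ℂ) ≤ 1 by simp)
    have houter := bl_hasDerivAt c hne
    have hcomp := HasDerivAt.comp t0 houter hinner
    have hD : HasDerivAt (fun z => s0 * bl c (conj t0 * z)) s1 t0 := by
      have h5 := hcomp.const_mul s0
      have heq : s0 * ((1 - (c:ℂ)^2)/(1 + c*(conj t0*t0))^2 * conj t0) = s1 := by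
        rw [conj_mul_self ht, mul_one]
        exact hder
      rw [heq] at h5
      exact h5
    have hval : (fun z => s0 * bl c (conj t0 * z)) t0 = s0 := by
      show s0 * bl c (conj t0 * t0) = s0
      rw [conj_mul_self ht, bl_one hc, mul_one]
    exact ntlittleo_of_hasDerivAt hD hval

/-- squared-Blaschke solution -/
lemma sol_bl2 {t0 s0 s1 : ℂ} (ht : norm t0 = 1) (hs0 : norm s0 = 1)
    {c : ℝ} (hc : |c| < 1) (hder : s0 * (2 * ((1 - (c:ℂ)^2)/(1 + (c:ℂ))^2) * conj t0) = s1) :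
    Sol1 t0 s0 s1 (fun z => s0 * (bl c (conj t0 * z))^2) := by
  have hct : norm (conj t0) = 1 := by rw [Complex.norm_conj, ht]
  constructor
  · constructor
    · intro z hz
      have habs : norm (conj t0 * z) ≤ 1 := by
        rw [norm_mul, hct, one_mul]; exact (mem_unitDisk.mp hz).le
      exact ((((bl_diffAt hc habs).comp z ((differentiableAt_id).const_mul _)).pow 2).const_mul s0).differentiableWithinAt
    · intro z hz
      have habs : norm (conj t0 * z) ≤ 1 := by
        rw [norm_mul, hct, one_mul]; exact (mem_unitDisk.mp hz).le
      rw [norm_mul, hs0, one_mul, norm_pow]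
      have := bl_abs_le hc habs
      nlinarith [norm_nonneg (bl c (conj t0 * z))]
  · have hinner : HasDerivAt (fun z : ℂ => conj t0 * z) (conj t0) t0 := by
      simpa using (hasDerivAt_id t0).const_mul (conj t0)
    have hne : (1:ℂ) + c * (conj t0 * t0) ≠ 0 := by
      rw [conj_mul_self ht, mul_one]
      simpa using bl_denom_ne hc (show norm (1:ℂ) ≤ 1 by simp)
    have houter := bl_hasDerivAt c hne
    have hcomp := HasDerivAt.comp t0 houter hinner
    have hpow := hcomp.pow 2
    have h5 : HasDerivAt (fun z => s0 * (bl c (conj t0 * z))^2) (s0 * ((2:ℕ) *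
        (bl c ∘ fun z : ℂ => conj t0 * z) t0 ^ (2-1) *
        ((1 - (c:ℂ)^2)/(1 + c*(conj t0*t0))^2 * conj t0))) t0 := hpow.const_mul s0
    have hD : HasDerivAt (fun z => s0 * (bl c (conj t0 * z))^2) s1 t0 := by
      have hblv : (bl c ∘ fun z => conj t0 * z) t0 = 1 := by
        show bl c (conj t0 * t0) = 1
        rw [conj_mul_self ht, bl_one hc]
      have heq2 : (fun y => (bl c ∘ fun z : ℂ => conj t0 * z) y ^ 2)
          = (fun z => (bl c (conj t0 * z))^2) := rfl
      have hval2 : s0 * ((2:ℕ) * (bl c ∘ fun z : ℂ => conj t0 * z) t0 ^ (2-1) *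
          ((1 - (c:ℂ)^2)/(1 + c*(conj t0*t0))^2 * conj t0)) = s1 := by
        rw [hblv, conj_mul_self ht, mul_one, ← hder]
        push_cast
        ring
      have h6 := h5
      rw [hval2] at h6
      convert h6 using 1
    have hval : (fun z => s0 * (bl c (conj t0 * z))^2) t0 = s0 := by
      show s0 * (bl c (conj t0 * t0))^2 = s0
      rw [conj_mul_self ht, bl_one hc]
      norm_num
    exact ntlittleo_of_hasDerivAt hD hval

/-- two distinct solutions when |s0| = 1 and x > 0 -/
lemma two_sols_eq {t0 s0 s1 : ℂ} (ht : norm t0 = 1) (hs0 : norm s0 = 1)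
    {x : ℝ} (hx : 0 < x) (hxs : t0 * s1 * conj s0 = (x:ℂ)) :
    ∃ f g, Sol1 t0 s0 s1 f ∧ Sol1 t0 s0 s1 g ∧ f 0 ≠ g 0 := by
  have h1 : conj t0 * t0 = 1 := conj_mul_self ht
  have h2 : s0 * conj s0 = 1 := by
    rw [Complex.mul_conj, Complex.normSq_eq_norm_sq, hs0]; norm_num
  have hs1 : s1 = (x:ℂ) * conj t0 * s0 := by
    linear_combination conj t0 * s0 * hxs - s1 * h1 - s1 * (conj t0 * t0) * h2
  set c : ℝ := (1-x)/(1+x) with hcdef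
  set c2 : ℝ := (2-x)/(2+x) with hc2def
  have hx1 : (0:ℝ) < 1 + x := by linarith
  have hx2 : (0:ℝ) < 2 + x := by linarith
  have hc : |c| < 1 := by
    rw [abs_lt, hcdef]
    constructor
    · rw [lt_div_iff₀ hx1]; nlinarith
    · rw [div_lt_one hx1]; nlinarith
  have hc2 : |c2| < 1 := by
    rw [abs_lt, hc2def]
    constructor
    · rw [lt_div_iff₀ hx2]; nlinarith
    · rw [div_lt_one hx2]; nlinarith
  have hcC : ((c:ℝ):ℂ) = (1 - (x:ℂ))/(1 + (x:ℂ)) := by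
    rw [hcdef]; push_cast; ring
  have hneC : (1:ℂ) + (x:ℂ) ≠ 0 := by
    intro h
    have : ((1+x : ℝ):ℂ) = 0 := by push_cast; linear_combination h
    exact hx1.ne' (by exact_mod_cast this)
  have hden : (1:ℂ) + (c:ℂ) ≠ 0 := by
    rw [hcC]
    intro h
    field_simp at h
    exact absurd (by linear_combination h : (2:ℂ) = 0) (by norm_num)
  have hcx : ((1:ℂ) - (c:ℂ)^2)/(1 + (c:ℂ))^2 = (x:ℂ) := by
    rw [hcC]
    field_simp
    try ring
  have hc2C : ((c2:ℝ):ℂ) = (2 - (x:ℂ))/(2 + (x:ℂ)) := by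
    rw [hc2def]; push_cast; ring
  have hneC2 : (2:ℂ) + (x:ℂ) ≠ 0 := by
    intro h
    have : ((2+x : ℝ):ℂ) = 0 := by push_cast; linear_combination h
    exact hx2.ne' (by exact_mod_cast this)
  have hc2x : ((1:ℂ) - (c2:ℂ)^2)/(1 + (c2:ℂ))^2 = (x:ℂ)/2 := by
    rw [hc2C]
    have hden2 : (2:ℂ) + (x:ℂ) + (2 - (x:ℂ)) ≠ 0 := by
      intro h
      norm_num at h
    field_simp
    try ring
  refine ⟨_, _, sol_bl ht hs0 hc ?_, sol_bl2 ht hs0 hc2 ?_, ?_⟩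
  · rw [hcx, hs1]; ring
  · rw [hc2x, hs1]; ring
  · simp only [mul_zero, bl_zero]
    intro h
    have hs0ne : s0 ≠ 0 := by
      intro h3
      rw [h3] at hs0
      simp at hs0
    have h4 : (c:ℂ) = (c2:ℂ)^2 := mul_left_cancel₀ hs0ne h
    have h5 : c = c2^2 := by exact_mod_cast h4
    rw [hcdef, hc2def, div_pow, div_eq_div_iff hx1.ne' (by positivity)] at h5
    nlinarith [pow_pos hx 3]

end BP1

/-- **Boundary interpolation of order one.** Existence holds iff `|s_0| < 1`, or `|s_0| = 1`
and `t_0 s_1 conj(s_0) ≥ 0`; uniqueness holds iff `|s_0| = 1` and `s_1 = 0`, in which case the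
unique solution is the constant `s_0`. -/
theorem bp_order_one (t0 : ℂ) (ht : ‖t0‖ = 1) (s0 s1 : ℂ) :
    ((∃ f, Sol1 t0 s0 s1 f) ↔
      (‖s0‖ < 1 ∨
        (‖s0‖ = 1 ∧ ∃ x : ℝ, 0 ≤ x ∧ t0 * s1 * conj s0 = (x : ℂ)))) ∧
    ((∃ f, Sol1 t0 s0 s1 f ∧ ∀ g, Sol1 t0 s0 s1 g → Set.EqOn g f unitDisk) ↔
      (‖s0‖ = 1 ∧ s1 = 0)) ∧
    (‖s0‖ = 1 → s1 = 0 →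
      ∀ f, Sol1 t0 s0 s1 f → Set.EqOn f (fun _ => s0) unitDisk) := by

  have h0mem : (0:ℂ) ∈ unitDisk := by simp [unitDisk]
  have ht0ne : t0 ≠ 0 := by
    intro h; rw [h] at ht; simp at ht
  have hs1zero : norm s0 = 1 → t0 * s1 * conj s0 = 0 → s1 = 0 := by
    intro hs0 h
    have hcs0 : conj s0 ≠ 0 := by
      intro h2
      have : norm (conj s0) = 0 := by rw [h2]; simp
      rw [Complex.norm_conj, hs0] at this
      norm_num at this
    rcases mul_eq_zero.mp h with h3 | h3
    · rcases mul_eq_zero.mp h3 with h4 | h4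
      · exact absurd h4 ht0ne
      · exact h4
    · exact absurd h3 hcs0
  have wfact : ∀ f, Sol1 t0 s0 s1 f → norm s0 = 1 →
      0 ≤ (t0*s1*conj s0).re ∧ t0*s1*conj s0 = (((t0*s1*conj s0).re : ℝ) : ℂ) := by
    intro f hsol hs0
    have hall : ∀ α : ℝ, 0 ≤ (t0*s1*conj s0).re + α * (t0*s1*conj s0).im := by
      intro α
      have h := BP1.re_ineq ht hsol hs0 α
      have hexp : ((1 - (α:ℂ)*Complex.I) * (t0*s1*conj s0)).re
          = (t0*s1*conj s0).re + α * (t0*s1*conj s0).im := by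
        simp [Complex.mul_re, Complex.sub_re, Complex.sub_im, Complex.mul_im]
        try ring
      rwa [hexp] at h
    have hre : 0 ≤ (t0*s1*conj s0).re := by
      have := hall 0
      simpa using this
    have him : (t0*s1*conj s0).im = 0 := by
      by_contra hne
      have h1 := hall (-((t0*s1*conj s0).re + 1) / (t0*s1*conj s0).im)
      rw [div_mul_cancel₀ _ hne] at h1
      linarith
    refine ⟨hre, ?_⟩
    apply Complex.ext
    · simp
    · simp [him]
  refine ⟨?_, ?_, ?_⟩
  · constructor
    · rintro ⟨f, hsol⟩
      have hle := BP1.abs_s0_le_one ht hsol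
      rcases lt_or_eq_of_le hle with hlt | heq
      · exact Or.inl hlt
      · right
        obtain ⟨hre, heqw⟩ := wfact f hsol heq
        exact ⟨heq, (t0*s1*conj s0).re, hre, heqw⟩
    · rintro (hlt | ⟨hs0, x, hx0, hxeq⟩)
      · obtain ⟨f, g, hf, hg, hne⟩ := BP1.two_sols_lt (s1 := s1) ht hlt
        exact ⟨f, hf⟩
      · rcases eq_or_lt_of_le hx0 with heq0 | hpos
        · have hx0' : t0 * s1 * conj s0 = 0 := by
            rw [hxeq, ← heq0]
            simp
          have hs1 : s1 = 0 := hs1zero hs0 hx0'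
          refine ⟨fun _ => s0, ?_⟩
          rw [hs1]
          exact BP1.sol_const (le_of_eq hs0)
        · obtain ⟨f, g, hf, _, _⟩ := BP1.two_sols_eq ht hs0 hpos hxeq
          exact ⟨f, hf⟩
  · constructor
    · rintro ⟨f, hsol, huniq⟩
      by_contra hcon
      have hle := BP1.abs_s0_le_one ht hsol
      rcases lt_or_eq_of_le hle with hlt | heq
      · obtain ⟨f1, f2, h1, h2, hne⟩ := BP1.two_sols_lt (s1 := s1) ht hlt
        have e1 := huniq f1 h1 h0mem
        have e2 := huniq f2 h2 h0mem
        exact hne (e1.trans e2.symm)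
      · have hs1ne : s1 ≠ 0 := fun h => hcon ⟨heq, h⟩
        obtain ⟨hre, heqw⟩ := wfact f hsol heq
        have hxne : (t0*s1*conj s0).re ≠ 0 := by
          intro h
          apply hs1ne
          apply hs1zero heq
          rw [heqw, h]
          simp
        have hpos : 0 < (t0*s1*conj s0).re := lt_of_le_of_ne hre (Ne.symm hxne)
        obtain ⟨f1, f2, h1, h2, hne⟩ := BP1.two_sols_eq ht heq hpos heqw
        have e1 := huniq f1 h1 h0mem
        have e2 := huniq f2 h2 h0mem
        exact hne (e1.trans e2.symm)
    · rintro ⟨hs0, hs1⟩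
      subst hs1
      refine ⟨fun _ => s0, BP1.sol_const (le_of_eq hs0), ?_⟩
      intro g hg
      exact BP1.const_of ht hs0 hg
  · intro hs0 hs1 f hsol
    subst hs1
    exact BP1.const_of ht hs0 hsol

end
end

section
/- Let N ≥ 2, t_0 ∈ 𝕋 and s_0, …, s_N ∈ ℂ. Then the set of functions f ∈ 𝒮 solving the problem BP_N is either empty, or consists of exactly one function, or is infinite. -/
open Complex Filter Matrix Metric Set Asymptotics
open scoped ComplexConjugate ComplexOrder Topology

noncomputable section

lemma unitDisk_open : IsOpen unitDisk := Metric.isOpen_ball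

lemma iD_eq_open {f : ℂ → ℂ} {n : ℕ} {z : ℂ} (hz : z ∈ unitDisk) :
    iteratedDerivWithin n f unitDisk z = iteratedDeriv n f z := by
  simp [iteratedDerivWithin, iteratedDeriv,
    iteratedFDerivWithin_of_isOpen (f := f) (𝕜 := ℂ) n unitDisk_open hz]

lemma stolz_sub (t0 : ℂ) (κ : ℝ) : stolzAngle t0 κ ⊆ unitDisk := fun _ h => h.1

theorem bp_solution_set_trichotomy' (N : ℕ) (t0 : ℂ) (s : ℕ → ℂ) :
    solSet t0 s N = ∅ ∨ (∃ g, solSet t0 s N = {g}) ∨ (solSet t0 s N).Infinite := by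
  rcases Set.eq_empty_or_nonempty (solSet t0 s N) with h | ⟨g0, hg0⟩
  · exact Or.inl h
  by_cases huniq : ∀ g ∈ solSet t0 s N, g = g0
  · exact Or.inr (Or.inl ⟨g0, Set.eq_singleton_iff_unique_mem.2 ⟨hg0, huniq⟩⟩)
  push_neg at huniq
  obtain ⟨g1, hg1, hne⟩ := huniq
  right; right
  obtain ⟨f1, hf1, rfl⟩ := hg1
  obtain ⟨f0, hf0, rfl⟩ := hg0
  -- convex combination map
  set F : ℝ → (unitDisk → ℂ) := fun t x => (t : ℂ) * f1 x + (1 - (t : ℂ)) * f0 x with hF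
  have hmem : ∀ t ∈ Set.Icc (0:ℝ) 1, F t ∈ solSet t0 s N := by
    rintro t ⟨ht0, ht1⟩
    refine ⟨fun z => (t : ℂ) * f1 z + (1 - (t : ℂ)) * f0 z, ⟨⟨?_, ?_⟩, ?_⟩, rfl⟩
    · exact ((differentiableOn_const _).mul hf1.1.1).add
        ((differentiableOn_const _).mul hf0.1.1)
    · intro z hz
      calc ‖(t : ℂ) * f1 z + (1 - (t : ℂ)) * f0 z‖
          ≤ ‖(t : ℂ) * f1 z‖ + ‖(1 - (t : ℂ)) * f0 z‖ :=
            norm_add_le _ _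
        _ ≤ t * 1 + (1 - t) * 1 := by
            rw [norm_mul, norm_mul]
            have h1 : ‖(t : ℂ)‖ = t := by
              rw [Complex.norm_real, Real.norm_of_nonneg ht0]
            have h2 : ‖1 - (t : ℂ)‖ = 1 - t := by
              rw [show (1 - (t:ℂ)) = ((1 - t : ℝ) : ℂ) by push_cast; ring,
                Complex.norm_real, Real.norm_of_nonneg (by linarith)]
            rw [h1, h2]
            exact add_le_add (mul_le_mul_of_nonneg_left (hf1.1.2 z hz) ht0)
              (mul_le_mul_of_nonneg_left (hf0.1.2 z hz) (by linarith))
        _ = 1 := by ring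
    · intro j hj κ hκ
      have hc1 : ContDiffOn ℂ j f1 unitDisk := hf1.1.1.contDiffOn unitDisk_open
      have hc0 : ContDiffOn ℂ j f0 unitDisk := hf0.1.1.contDiffOn unitDisk_open
      have hud : UniqueDiffOn ℂ unitDisk := unitDisk_open.uniqueDiffOn
      have heq : ∀ z ∈ unitDisk,
          iteratedDeriv j (fun w => (t : ℂ) * f1 w + (1 - (t : ℂ)) * f0 w) z / (j.factorial : ℂ)
          = (t : ℂ) * (iteratedDeriv j f1 z / (j.factorial : ℂ))
            + (1 - (t : ℂ)) * (iteratedDeriv j f0 z / (j.factorial : ℂ)) := by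
        intro z hz
        have : iteratedDerivWithin j
            ((fun w => (t : ℂ) * f1 w) + (fun w => (1 - (t : ℂ)) * f0 w)) unitDisk z
            = iteratedDerivWithin j (fun w => (t : ℂ) * f1 w) unitDisk z
              + iteratedDerivWithin j (fun w => (1 - (t : ℂ)) * f0 w) unitDisk z :=
          iteratedDerivWithin_add hz hud
            (ContDiffOn.mul contDiffOn_const hc1 z hz) (ContDiffOn.mul contDiffOn_const hc0 z hz)
        rw [show (fun w => (t : ℂ) * f1 w + (1 - (t : ℂ)) * f0 w)
            = (fun w => (t : ℂ) * f1 w) + (fun w => (1 - (t : ℂ)) * f0 w) from rfl] at *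
        rw [← iD_eq_open hz, this,
          iteratedDerivWithin_const_mul hz hud _ (hc1 z hz),
          iteratedDerivWithin_const_mul hz hud _ (hc0 z hz),
          iD_eq_open hz, iD_eq_open hz]
        field_simp
      have h1 := hf1.2 j hj κ hκ
      have h0 := hf0.2 j hj κ hκ
      have hlim : Filter.Tendsto
          (fun z => (t : ℂ) * (iteratedDeriv j f1 z / (j.factorial : ℂ))
            + (1 - (t : ℂ)) * (iteratedDeriv j f0 z / (j.factorial : ℂ)))
          (nhdsWithin t0 (stolzAngle t0 κ))
          (nhds ((t : ℂ) * s j + (1 - (t : ℂ)) * s j)) :=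
        ((tendsto_const_nhds.mul h1).add (tendsto_const_nhds.mul h0))
      have : ((t : ℂ) * s j + (1 - (t : ℂ)) * s j) = s j := by ring
      rw [this] at hlim
      refine hlim.congr' ?_
      filter_upwards [self_mem_nhdsWithin] with z hz
      exact (heq z (stolz_sub t0 κ hz)).symm
  -- injectivity on Icc
  have hx : ∃ x : unitDisk, f1 x ≠ f0 x := by
    by_contra hc
    push_neg at hc
    exact hne (funext fun x => by
      show f1 x = f0 x
      exact hc x)
  obtain ⟨x, hx⟩ := hx
  have hinj : Set.InjOn F (Set.Icc (0:ℝ) 1) := by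
    intro a _ b _ hab
    have := congrFun hab x
    simp only [hF] at this
    have h2 : ((a : ℂ) - b) * (f1 x - f0 x) = 0 := by ring_nf; ring_nf at this; linear_combination this
    rcases mul_eq_zero.1 h2 with h | h
    · have h3 : (a : ℂ) = b := sub_eq_zero.1 h
      exact_mod_cast h3
    · exact absurd (sub_eq_zero.1 h) hx
  have : (Set.Icc (0:ℝ) 1).Infinite := Set.Icc_infinite (by norm_num)
  exact Set.Infinite.mono (by rintro g ⟨t, ht, rfl⟩; exact hmem t ht) (this.image hinj)

/-- The solution set of `BP_N` (identifying functions equal on the unit disk) is either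
empty, a singleton, or infinite. -/
theorem bp_solution_set_trichotomy (N : ℕ) (hN : 2 ≤ N) (t0 : ℂ)
    (ht : ‖t0‖ = 1) (s : ℕ → ℂ) :
    solSet t0 s N = ∅ ∨ (∃ g, solSet t0 s N = {g}) ∨ (solSet t0 s N).Infinite :=
  bp_solution_set_trichotomy' N t0 s
end
end
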